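/- arXiv:1502.05547 — 10 statements merged into one kernel-verified Lean document; each statement's English description precedes it below -/
import Mathlib

section
/- Let $X$ be a vector space of even dimension $n = 2m \geq 2$ over $\mathbb{F}_q$, and let $X = X_1 \cup \cdots \cup X_t$ be a nontrivial subspace partition of $X$ (so $t > 1$). Then $t \geq q^m + 1$. -/
theorem partition_number_even
    {K X : Type*} [Field K] [Fintype K] [AddCommGroup X] [Module K X] [FiniteDimensional K X]
    (m : ℕ) (hm : 1 ≤ m) (hdim : Module.finrank K X = 2 * m)
    (t : ℕ) (ht : 1 < t) (P : Fin t → Submodule K X)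
    (hne : ∀ i, P i ≠ ⊥)
    (hpart : ∀ x : X, x ≠ 0 → ∃! i, x ∈ P i) :
    Fintype.card K ^ m + 1 ≤ t := by
  classical
  haveI : Finite X := Module.finite_of_finite K
  haveI : Fintype X := Fintype.ofFinite X
  set q := Fintype.card K with hq
  have hq2 : 2 ≤ q := Fintype.one_lt_card
  set d : Fin t → ℕ := fun i => Module.finrank K (P i) with hd
  have hcard : ∀ i, Fintype.card (P i) = q ^ d i := fun i => Module.card_eq_pow_finrank
  have hcardX : Fintype.card X = q ^ (2 * m) := by
    rw [Module.card_eq_pow_finrank (K := K), hdim]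
  have hd1 : ∀ i, 1 ≤ d i := by
    intro i
    have : Nontrivial (P i) := (Submodule.nontrivial_iff_ne_bot).2 (hne i)
    exact Module.finrank_pos
  have hdisj : ∀ i j, i ≠ j → Disjoint (P i) (P j) := by
    intro i j hij
    rw [Submodule.disjoint_def]
    intro x hxi hxj
    by_contra hx
    obtain ⟨k, hk, huniq⟩ := hpart x hx
    exact hij ((huniq i hxi).trans (huniq j hxj).symm)
  have hdim2 : ∀ i j, i ≠ j → d i + d j ≤ 2 * m := by
    intro i j hij
    have := Submodule.finrank_add_finrank_le_of_disjoint (hdisj i j hij)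
    rwa [hdim] at this
  set S : Fin t → Finset X := fun i => Finset.univ.filter (fun x => x ∈ P i ∧ x ≠ 0) with hS
  have hScard : ∀ i, (S i).card + 1 = q ^ d i := by
    intro i
    have h1 : (Finset.univ.filter (fun x => x ∈ P i)).card = q ^ d i := by
      rw [← hcard i, Fintype.card_subtype]
    have h2 : S i = (Finset.univ.filter (fun x => x ∈ P i)).erase 0 := by
      ext x
      simp [hS, and_comm, Finset.mem_erase]
    have h0 : (0 : X) ∈ Finset.univ.filter (fun x => x ∈ P i) := by
      simp [Submodule.zero_mem]
    rw [h2, Finset.card_erase_of_mem h0, h1]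
    have : 1 ≤ q ^ d i := Nat.one_le_pow _ _ (by omega)
    omega
  have hSdisj : ∀ i ∈ (Finset.univ : Finset (Fin t)), ∀ j ∈ Finset.univ, i ≠ j →
      Disjoint (S i) (S j) := by
    intro i _ j _ hij
    rw [Finset.disjoint_left]
    intro x hxi hxj
    simp only [hS, Finset.mem_filter] at hxi hxj
    obtain ⟨k, hk, huniq⟩ := hpart x hxi.2.2
    exact hij ((huniq i hxi.2.1).trans (huniq j hxj.2.1).symm)
  have hcover : Finset.univ.biUnion S = Finset.univ.erase (0 : X) := by
    ext x
    simp only [Finset.mem_biUnion, Finset.mem_erase, Finset.mem_univ, and_true, hS,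
      Finset.mem_filter, true_and]
    constructor
    · rintro ⟨i, hi, h0⟩; exact h0
    · intro hx0
      obtain ⟨i, hi, _⟩ := hpart x hx0
      exact ⟨i, hi, hx0⟩
  have hsum : ∑ i, (S i).card + 1 = q ^ (2 * m) := by
    rw [← Finset.card_biUnion hSdisj, hcover, Finset.card_erase_of_mem (Finset.mem_univ 0),
      Finset.card_univ, hcardX]
    have : 1 ≤ q ^ (2 * m) := Nat.one_le_pow _ _ (by omega)
    omega
  have hqm1 : 1 ≤ q ^ m := Nat.one_le_pow _ _ (by omega)
  by_cases hcase : ∀ i, d i ≤ m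
  · -- all dimensions ≤ m
    have hle2 : ∑ i, (S i).card + t ≤ t * q ^ m := by
      calc ∑ i, (S i).card + t = ∑ i : Fin t, ((S i).card + 1) := by
            rw [Finset.sum_add_distrib, Finset.sum_const, Finset.card_univ, Fintype.card_fin,
              smul_eq_mul, mul_one]
        _ ≤ ∑ _i : Fin t, q ^ m := by
            apply Finset.sum_le_sum
            intro i _
            rw [hScard i]
            exact Nat.pow_le_pow_right (by omega) (hcase i)
        _ = t * q ^ m := by
            rw [Finset.sum_const, Finset.card_univ, Fintype.card_fin, smul_eq_mul]
    have hQ2 : q ^ (2 * m) = q ^ m * q ^ m := by rw [two_mul, pow_add]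
    have key : q ^ m * q ^ m + t ≤ t * q ^ m + 1 := by
      rw [← hQ2, ← hsum]; omega
    by_contra hcon
    push_neg at hcon
    have htq : t ≤ q ^ m := by omega
    have hmul : t * q ^ m ≤ q ^ m * q ^ m := Nat.mul_le_mul_right _ htq
    have : t ≤ 1 := by linarith
    omega
  · -- some dimension > m
    push_neg at hcase
    obtain ⟨i0, hi0⟩ := hcase
    obtain ⟨j0, hj0⟩ : ∃ j0 : Fin t, j0 ≠ i0 := by
      haveI : Nontrivial (Fin t) := Fin.nontrivial_iff_two_le.mpr ht
      exact exists_ne i0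
    have hd_le : d i0 ≤ 2 * m - 1 := by
      have := hdim2 j0 i0 hj0
      have := hd1 j0
      omega
    set e : ℕ := 2 * m - d i0 with he
    have he1 : 1 ≤ e := by omega
    have hde : d i0 + e = 2 * m := by omega
    have hothers : ∀ j, j ≠ i0 → d j ≤ e := by
      intro j hj
      have := hdim2 j i0 hj
      omega
    set s := t - 1 with hs
    have hts : t = s + 1 := by omega
    set R := ∑ j ∈ Finset.univ.erase i0, (S j).card with hR
    have hsplit : ∑ i, (S i).card = (S i0).card + R := by
      rw [hR, ← Finset.add_sum_erase _ _ (Finset.mem_univ i0)]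
    have hbound : R + s ≤ s * q ^ e := by
      calc R + s = ∑ j ∈ Finset.univ.erase i0, ((S j).card + 1) := by
            rw [Finset.sum_add_distrib, Finset.sum_const,
              Finset.card_erase_of_mem (Finset.mem_univ i0), Finset.card_univ, Fintype.card_fin,
              smul_eq_mul, mul_one, hR, hs]
        _ ≤ ∑ _j ∈ Finset.univ.erase i0, q ^ e := by
            apply Finset.sum_le_sum
            intro j hj
            rw [hScard j]
            exact Nat.pow_le_pow_right (by omega) (hothers j (Finset.mem_erase.1 hj).1)
        _ = s * q ^ e := by
            rw [Finset.sum_const, Finset.card_erase_of_mem (Finset.mem_univ i0),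
              Finset.card_univ, Fintype.card_fin, smul_eq_mul, hs]
    have hDE : q ^ (2 * m) = q ^ d i0 * q ^ e := by rw [← pow_add, hde]
    have hSi0 := hScard i0
    have hqe2 : 2 ≤ q ^ e := by
      calc 2 = 2 ^ 1 := rfl
        _ ≤ q ^ e := (Nat.pow_le_pow_left (by omega) 1).trans (Nat.pow_le_pow_right (by omega) he1)
    have hsum2 : (S i0).card + R + 1 = q ^ d i0 * q ^ e := by
      rw [← hDE, ← hsum, hsplit]
    have key : q ^ d i0 * q ^ e + s ≤ s * q ^ e + q ^ d i0 := by linarith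
    -- deduce s ≥ q ^ d i0
    have hmain : q ^ d i0 ≤ s := by
      by_contra hcon
      push_neg at hcon
      have hz : (q:ℤ) ^ d i0 * (q:ℤ) ^ e + (s:ℤ) ≤ (s:ℤ) * (q:ℤ) ^ e + (q:ℤ) ^ d i0 := by
        exact_mod_cast key
      have hc : (s:ℤ) < (q:ℤ) ^ d i0 := by exact_mod_cast hcon
      have he2 : (2:ℤ) ≤ (q:ℤ) ^ e := by exact_mod_cast hqe2
      nlinarith [mul_pos (show (0:ℤ) < (q:ℤ) ^ d i0 - s by linarith)
        (show (0:ℤ) < (q:ℤ) ^ e - 1 by linarith)]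
    have hdm : q ^ m ≤ q ^ d i0 := Nat.pow_le_pow_right (by omega) (by omega)
    omega
end

section
/- Let $X$ be a vector space of odd dimension $n = 2m+1 \geq 3$ over $\mathbb{F}_q$, and let $X = X_1 \cup \cdots \cup X_t$ be a nontrivial subspace partition of $X$ (so $t > 1$). Then $t \geq q^{m+1} + 1$. -/
theorem partition_number_odd
    {K X : Type*} [Field K] [Fintype K] [AddCommGroup X] [Module K X] [FiniteDimensional K X]
    (m : ℕ) (hm : 1 ≤ m) (hdim : Module.finrank K X = 2 * m + 1)
    (t : ℕ) (ht : 1 < t) (P : Fin t → Submodule K X)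
    (hne : ∀ i, P i ≠ ⊥)
    (hpart : ∀ x : X, x ≠ 0 → ∃! i, x ∈ P i) :
    Fintype.card K ^ (m + 1) + 1 ≤ t := by
  classical
  have hXfin : Finite X := Module.finite_of_finite K
  have : Fintype X := Fintype.ofFinite X
  set q := Fintype.card K with hq
  have hq2 : 2 ≤ q := Fintype.one_lt_card
  set n := 2 * m + 1 with hn
  set d : Fin t → ℕ := fun i => Module.finrank K (P i) with hd
  have hd1 : ∀ i, 1 ≤ d i := fun i =>
    Module.finrank_pos_iff.mpr ((Submodule.nontrivial_iff_ne_bot).mpr (hne i))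
  -- disjointness
  have hdisj : ∀ i j, i ≠ j → Disjoint (P i) (P j) := by
    intro i j hij
    rw [Submodule.disjoint_def]
    intro x hxi hxj
    by_contra hx0
    obtain ⟨k, -, hk⟩ := hpart x hx0
    exact hij ((hk i hxi).trans (hk j hxj).symm)
  have hsum : ∀ i j, i ≠ j → d i + d j ≤ n := by
    intro i j hij
    have := Submodule.finrank_add_finrank_le_of_disjoint (hdisj i j hij)
    rwa [hdim] at this
  -- finsets
  set A : Fin t → Finset X := fun i => Finset.univ.filter (· ∈ P i) with hA
  have hcardA : ∀ i, (A i).card = q ^ d i := by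
    intro i
    have h1 : (A i).card = Fintype.card (P i) := (Fintype.card_subtype _).symm
    rw [h1, Module.card_eq_pow_finrank (K := K)]
  have hcardX : Fintype.card X = q ^ n := by
    rw [Module.card_eq_pow_finrank (K := K), hdim]
  have h0A : ∀ i, (0 : X) ∈ A i := by
    intro i; simp [hA, Submodule.zero_mem]
  -- generic counting bound
  have hcount : ∀ (s : Finset X) (I : Finset (Fin t)) (e : ℕ),
      (∀ x ∈ s, x ≠ 0 ∧ ∃ i ∈ I, x ∈ P i) → (∀ i ∈ I, d i ≤ e) →
      s.card ≤ I.card * (q ^ e - 1) := by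
    intro s I e hs he
    have hsub : s ⊆ I.biUnion (fun i => (A i).erase 0) := by
      intro x hx
      obtain ⟨hx0, i, hiI, hxi⟩ := hs x hx
      exact Finset.mem_biUnion.mpr ⟨i, hiI, Finset.mem_erase.mpr ⟨hx0, by simp [hA, hxi]⟩⟩
    calc s.card ≤ (I.biUnion (fun i => (A i).erase 0)).card := Finset.card_le_card hsub
      _ ≤ ∑ i ∈ I, ((A i).erase 0).card := Finset.card_biUnion_le
      _ ≤ ∑ i ∈ I, (q ^ e - 1) := by
          apply Finset.sum_le_sum
          intro i hi
          rw [Finset.card_erase_of_mem (h0A i), hcardA i]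
          have : q ^ d i ≤ q ^ e := Nat.pow_le_pow_right (by omega) (he i hi)
          omega
      _ = I.card * (q ^ e - 1) := by rw [Finset.sum_const, smul_eq_mul]
  -- choose maximizer
  obtain ⟨i0, -, hi0⟩ := Finset.exists_max_image Finset.univ d ⟨⟨0, by omega⟩, Finset.mem_univ _⟩
  by_cases hcase : d i0 ≤ m
  · -- all dims ≤ m
    have key : q ^ n - 1 ≤ t * (q ^ m - 1) := by
      have := hcount (Finset.univ.erase 0) Finset.univ m
        (by
          intro x hx
          have hx0 : x ≠ 0 := (Finset.mem_erase.mp hx).1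
          obtain ⟨i, hi, -⟩ := hpart x hx0
          exact ⟨hx0, i, Finset.mem_univ i, hi⟩)
        (fun i _ => le_trans (hi0 i (Finset.mem_univ i)) hcase)
      rwa [Finset.card_erase_of_mem (Finset.mem_univ 0), Finset.card_univ, hcardX,
        Finset.card_univ, Fintype.card_fin] at this
    -- arithmetic
    by_contra hcon
    push_neg at hcon
    have htle : t ≤ q ^ (m + 1) := by omega
    have h1 : q ^ (m + 1) * q ^ m = q ^ n := by
      rw [← pow_add]; congr 1; omega
    have h2 : t * (q ^ m - 1) ≤ q ^ (m + 1) * (q ^ m - 1) :=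
      Nat.mul_le_mul_right _ htle
    have h3 : q ^ (m + 1) * (q ^ m - 1) = q ^ n - q ^ (m + 1) := by
      rw [Nat.mul_sub_one] at *
      omega
    have h4 : 2 ≤ q ^ (m + 1) := by
      calc 2 ≤ q := hq2
        _ = q ^ 1 := (pow_one q).symm
        _ ≤ q ^ (m + 1) := Nat.pow_le_pow_right (by omega) (by omega)
    have h5 : q ^ (m + 1) ≤ q ^ n := Nat.pow_le_pow_right (by omega) (by omega)
    omega
  · -- d i0 ≥ m + 1
    push_neg at hcase
    set D := d i0 with hD
    obtain ⟨j, hj⟩ := Fintype.exists_ne_of_one_lt_card (by simpa using ht) i0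
    have hDn : D + 1 ≤ n := by
      have h1 := hd1 j
      have h2 := hsum j i0 hj
      omega
    have key : q ^ n - q ^ D ≤ (t - 1) * (q ^ (n - D) - 1) := by
      have := hcount (Finset.univ \ A i0) (Finset.univ.erase i0) (n - D)
        (by
          intro x hx
          have hxnot : x ∉ P i0 := by
            intro hmem
            have : x ∈ A i0 := by simp [hA, hmem]
            simp_all [Finset.mem_sdiff]
          have hx0 : x ≠ 0 := by
            intro h; exact hxnot (h ▸ Submodule.zero_mem _)
          obtain ⟨i, hi, -⟩ := hpart x hx0
          have hii0 : i ≠ i0 := fun h => hxnot (h ▸ hi)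
          exact ⟨hx0, i, Finset.mem_erase.mpr ⟨hii0, Finset.mem_univ i⟩, hi⟩)
        (by
          intro i hi
          have hii0 : i ≠ i0 := (Finset.mem_erase.mp hi).1
          have := hsum i i0 hii0
          omega)
      rwa [Finset.card_sdiff_of_subset (Finset.subset_univ _), Finset.card_univ, hcardX, hcardA,
        Finset.card_erase_of_mem (Finset.mem_univ i0), Finset.card_univ, Fintype.card_fin] at this
    have heq : q ^ D * (q ^ (n - D) - 1) = q ^ n - q ^ D := by
      rw [Nat.mul_sub_one]
      have : q ^ D * q ^ (n - D) = q ^ n := by rw [← pow_add]; congr 1; omega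
      omega
    have hpos : 1 ≤ q ^ (n - D) - 1 := by
      have : q ^ 1 ≤ q ^ (n - D) := Nat.pow_le_pow_right (by omega) (by omega)
      rw [pow_one] at this; omega
    have hle : q ^ D ≤ t - 1 := by
      have h := key
      rw [← heq] at h
      exact Nat.le_of_mul_le_mul_right h (by omega)
    have : q ^ (m + 1) ≤ q ^ D := Nat.pow_le_pow_right (by omega) (by omega)
    omega
end

section
/- Let $X$ be a vector space of odd dimension $2m+1$ over $\mathbb{F}_q$, where $m \geq 1$. Then there exists a subspace partition of $X$ into exactly $q^{m+1} + 1$ subspaces, consisting of one subspace of dimension $m+1$ and $q^{m+1}$ subspaces of dimension $m$. In particular, the lower bound $q^{m+1}+1$ for the number of parts of a nontrivial subspace partition of a $(2m+1)$-dimensional space is attained. -/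
open Polynomial

section Ext

variable (K : Type*) [Field K] [Fintype K] (d : ℕ)

noncomputable abbrev MyExt : Type _ := SplittingField (X ^ (Fintype.card K ^ d) - X : K[X])

noncomputable instance : Field (MyExt K d) := SplittingField.instField _
noncomputable instance : Algebra K (MyExt K d) := inferInstance

instance : FiniteDimensional K (MyExt K d) :=
  IsSplittingField.finiteDimensional _ (X ^ (Fintype.card K ^ d) - X : K[X])

instance : Finite (MyExt K d) := Module.finite_of_finite K

noncomputable instance : Fintype (MyExt K d) := Fintype.ofFinite _

lemma myext_card (hd : d ≠ 0) :
    Fintype.card K ^ Module.finrank K (MyExt K d) = Fintype.card K ^ d := by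
  classical
  set q := Fintype.card K with hqdef
  have hq1 : 1 < q := Fintype.one_lt_card
  set g : K[X] := X ^ (q ^ d) - X with hg
  have hgne : g ≠ 0 := FiniteField.X_pow_card_pow_sub_X_ne_zero _ hd hq1
  obtain ⟨p, hp⟩ := CharP.exists K
  haveI : CharP K p := hp
  haveI hpp : Fact p.Prime := ⟨CharP.char_is_prime K p⟩
  obtain ⟨k, -, hk⟩ := FiniteField.card K p
  haveI : FiniteDimensional K (MyExt K d) := IsSplittingField.finiteDimensional _ g
  haveI : Finite (MyExt K d) := Module.finite_of_finite K
  haveI : Fintype (MyExt K d) := Fintype.ofFinite _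
  haveI : CharP (MyExt K d) p := charP_of_injective_algebraMap (algebraMap K (MyExt K d)).injective p
  have hsep : g.Separable := galois_poly_separable p (q ^ d)
    (dvd_pow (by rw [hqdef, hk]; exact dvd_pow_self p k.2.ne' : p ∣ q) hd)
  have key : Fintype.card (g.rootSet (MyExt K d)) = g.natDegree :=
    card_rootSet_eq_natDegree hsep (SplittingField.splits g)
  have hdeg : g.natDegree = q ^ d := FiniteField.X_pow_card_pow_sub_X_natDegree_eq _ hd hq1
  have hQ : q ^ d = p ^ ((k : ℕ) * d) := by rw [hqdef, hk, pow_mul]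
  -- the root set is everything
  have huniv : g.rootSet (MyExt K d) = Set.univ := by
    have hclosed : ∀ x : MyExt K d, x ∈ g.rootSet (MyExt K d) ↔
        x ∈ RingHom.eqLocus (iterateFrobenius (MyExt K d) p ((k : ℕ) * d)) (RingHom.id _) := by
      intro x
      rw [mem_rootSet_of_ne hgne]
      have hmem : x ∈ RingHom.eqLocus (iterateFrobenius (MyExt K d) p ((k : ℕ) * d))
          (RingHom.id _) ↔ x ^ (q ^ d) = x := by
        constructor
        · intro h
          have h2 : iterateFrobenius (MyExt K d) p ((k:ℕ)*d) x = x := h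
          rwa [iterateFrobenius_def, ← hQ] at h2
        · intro h
          show iterateFrobenius (MyExt K d) p ((k:ℕ)*d) x = x
          rwa [iterateFrobenius_def, ← hQ]
      rw [hmem]
      simp only [hg, map_sub, map_pow, aeval_X, sub_eq_zero]
    rw [Set.eq_univ_iff_forall]
    intro x
    have hx : x ∈ (⊤ : Subalgebra K (MyExt K d)) := trivial
    rw [← SplittingField.adjoin_rootSet g, Algebra.mem_adjoin_iff] at hx
    rw [hclosed]
    refine Subring.closure_le.mpr ?_ hx
    rintro y (⟨r, rfl⟩ | hy)
    · show iterateFrobenius (MyExt K d) p ((k:ℕ)*d) ((algebraMap K (MyExt K d)) r) = _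
      rw [iterateFrobenius_def, ← hQ, ← map_pow, FiniteField.pow_card_pow]
      rfl
    · exact ((hclosed y).mp hy)
  have hcard : Fintype.card (MyExt K d) = q ^ d := by
    have h1 : Fintype.card (MyExt K d) = Fintype.card (g.rootSet (MyExt K d)) :=
      (Fintype.card_congr ((Equiv.setCongr huniv).trans (Equiv.Set.univ _))).symm
    rw [h1, key, hdeg]
  rw [← hcard, Module.card_eq_pow_finrank (K := K) (V := MyExt K d)]

lemma myext_finrank (hd : d ≠ 0) : Module.finrank K (MyExt K d) = d := by
  have h := myext_card K d hd
  exact Nat.pow_right_injective Fintype.one_lt_card h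

end Ext

theorem optimal_partition_odd_dimension
    {K X : Type*} [Field K] [Fintype K] [AddCommGroup X] [Module K X] [FiniteDimensional K X]
    (m : ℕ) (hm : 1 ≤ m) (hdim : Module.finrank K X = 2 * m + 1) :
    ∃ P : Fin (Fintype.card K ^ (m + 1) + 1) → Submodule K X,
      (∀ i, P i ≠ ⊥) ∧
      (∀ x : X, x ≠ 0 → ∃! i, x ∈ P i) ∧
      ∃ i₀, Module.finrank K (P i₀) = m + 1 ∧
        ∀ i, i ≠ i₀ → Module.finrank K (P i) = m := by
  classical
  set q := Fintype.card K with hq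
  set L := MyExt K (m + 1) with hLdef
  have hL : Module.finrank K L = m + 1 := myext_finrank K (m + 1) (Nat.succ_ne_zero m)
  have hcardL : Fintype.card L = q ^ (m + 1) := by
    rw [Module.card_eq_pow_finrank (K := K) (V := L), hL]
  set H := (Fin m → K) with hHdef
  have hH : Module.finrank K H = m := Module.finrank_fin_fun K
  let b : Module.Basis (Fin (m + 1)) K L := Module.finBasisOfFinrankEq K L hL
  let j : H →ₗ[K] L := (Pi.basisFun K (Fin m)).constr K (fun i => b (Fin.castSucc i))
  have hjapp : ∀ v : H, j v = ∑ i, v i • b (Fin.castSucc i) := by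
    intro v
    simp only [j, Module.Basis.constr_apply_fintype, Module.Basis.equivFun_apply]
    exact Finset.sum_congr rfl fun i _ => by rw [Pi.basisFun_repr]
  have hli : LinearIndependent K (fun i : Fin m => b (Fin.castSucc i)) :=
    b.linearIndependent.comp _ (Fin.castSucc_injective m)
  have hj : Function.Injective j := by
    rw [← LinearMap.ker_eq_bot, LinearMap.ker_eq_bot']
    intro v hv
    rw [hjapp] at hv
    funext i
    exact Fintype.linearIndependent_iff.mp hli v hv i
  set W := (L × H) with hWdef
  have hWrank : Module.finrank K W = 2 * m + 1 := by
    show Module.finrank K (L × H) = 2 * m + 1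
    rw [Module.finrank_prod, hL, hH]; ring
  -- the linear maps whose kernels are the parts
  let Fm : L → (W →ₗ[K] L) := fun a =>
    ((LinearMap.mulLeft K a).comp (LinearMap.fst K L H)) - j.comp (LinearMap.snd K L H)
  have hFmapp : ∀ (a : L) (w : W), Fm a w = a * w.1 - j w.2 := by
    intro a w; rfl
  let part : Option L → Submodule K W := fun o =>
    match o with
    | none => LinearMap.ker (LinearMap.fst K L H)
    | some a => LinearMap.ker (Fm a)
  have hmem_some : ∀ (a : L) (w : W), w ∈ part (some a) ↔ a * w.1 = j w.2 := by
    intro a w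
    show Fm a w = 0 ↔ _
    rw [hFmapp, sub_eq_zero]
  have hmem_none : ∀ w : W, w ∈ part none ↔ w.1 = 0 := fun w => Iff.rfl
  -- partition property
  have hpartition : ∀ w : W, w ≠ 0 → ∃! o : Option L, w ∈ part o := by
    intro w hw
    by_cases hx : w.1 = 0
    · refine ⟨none, (hmem_none w).mpr hx, ?_⟩
      rintro (_ | a) ho
      · rfl
      · exfalso
        rw [hmem_some] at ho
        rw [hx, mul_zero] at ho
        have h2 : w.2 = 0 := hj (by rw [← ho, map_zero])
        exact hw (Prod.ext hx h2)
    · refine ⟨some (j w.2 * w.1⁻¹), (hmem_some _ _).mpr ?_, ?_⟩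
      · rw [mul_assoc, inv_mul_cancel₀ hx, mul_one]
      · rintro (_ | a) ho
        · exact absurd ((hmem_none w).mp ho) hx
        · rw [hmem_some] at ho
          have : a = j w.2 * w.1⁻¹ := by
            rw [← ho, mul_assoc, mul_inv_cancel₀ hx, mul_one]
          rw [this]
  -- dimensions
  have hdim_none : Module.finrank K (part none) = m := by
    have hsurj : Function.Surjective (LinearMap.fst K L H) := fun y => ⟨(y, 0), rfl⟩
    have h1 := LinearMap.finrank_range_add_finrank_ker (LinearMap.fst K L H)
    rw [LinearMap.range_eq_top.mpr hsurj, finrank_top, hWrank, hL] at h1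
    show Module.finrank K (LinearMap.ker (LinearMap.fst K L H)) = m
    omega
  have hdim_some : ∀ a : L, a ≠ 0 → Module.finrank K (part (some a)) = m := by
    intro a ha
    have hsurj : Function.Surjective (Fm a) := by
      intro y
      refine ⟨(a⁻¹ * y, 0), ?_⟩
      rw [hFmapp]
      simp [mul_inv_cancel_left₀ ha]
    have h1 := LinearMap.finrank_range_add_finrank_ker (Fm a)
    rw [LinearMap.range_eq_top.mpr hsurj, finrank_top, hWrank, hL] at h1
    show Module.finrank K (LinearMap.ker (Fm a)) = m
    omega
  have hdim_zero : Module.finrank K (part (some 0)) = m + 1 := by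
    have hrange : LinearMap.range (Fm 0) = LinearMap.range j := by
      ext y
      simp only [LinearMap.mem_range]
      constructor
      · rintro ⟨w, hwy⟩
        exact ⟨-w.2, by rw [map_neg, ← hwy, hFmapp, zero_mul, zero_sub]⟩
      · rintro ⟨h, hy⟩
        exact ⟨(0, -h), by rw [hFmapp, zero_mul, zero_sub, map_neg, neg_neg, hy]⟩
    have h1 := LinearMap.finrank_range_add_finrank_ker (Fm 0)
    rw [hrange, LinearMap.finrank_range_of_inj hj, hWrank, hH] at h1
    show Module.finrank K (LinearMap.ker (Fm 0)) = m + 1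
    omega
  have hdim_pos : ∀ o : Option L, part o ≠ ⊥ := by
    rintro (_ | a) hbot
    · rw [hbot, finrank_bot] at hdim_none
      omega
    · by_cases ha : a = 0
      · subst ha
        rw [hbot, finrank_bot] at hdim_zero
        omega
      · have h3 := hdim_some a ha
        rw [hbot, finrank_bot] at h3
        omega
  -- the index equivalence
  let e : Fin (q ^ (m + 1)) ≃ L := (Fintype.equivFinOfCardEq hcardL).symm
  let σ : Fin (q ^ (m + 1) + 1) ≃ Option L :=
    (finSuccEquiv (q ^ (m + 1))).trans (Equiv.optionCongr e)
  -- the linear equivalence with X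
  obtain ⟨ψ⟩ : Nonempty (W ≃ₗ[K] X) :=
    FiniteDimensional.nonempty_linearEquiv_of_finrank_eq (by rw [hWrank, hdim])
  let P : Fin (q ^ (m + 1) + 1) → Submodule K X := fun i => (part (σ i)).map (ψ : W →ₗ[K] X)
  have hPmem : ∀ (i : Fin (q ^ (m + 1) + 1)) (x : X), x ∈ P i ↔ ψ.symm x ∈ part (σ i) := by
    intro i x
    show x ∈ (part (σ i)).map (ψ : W →ₗ[K] X) ↔ _
    exact Submodule.mem_map_equiv (part (σ i))
  have hPrank : ∀ i : Fin (q ^ (m + 1) + 1), Module.finrank K ↥(P i) = Module.finrank K ↥(part (σ i)) := by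
    intro i
    exact LinearEquiv.finrank_map_eq ψ (part (σ i))
  refine ⟨P, ?_, ?_, σ.symm (some 0), ?_, ?_⟩
  · intro i hbot
    apply hdim_pos (σ i)
    have h2 : (part (σ i)).map (ψ : W →ₗ[K] X) = (⊥ : Submodule K W).map (ψ : W →ₗ[K] X) := by
      rw [Submodule.map_bot]
      exact hbot
    exact Submodule.map_injective_of_injective (f := (ψ : W →ₗ[K] X)) ψ.injective h2
  · intro x hx
    have hw : ψ.symm x ≠ 0 := by
      intro h0
      apply hx
      rw [← ψ.apply_symm_apply x, h0, map_zero]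
    obtain ⟨o, ho, huniq⟩ := hpartition (ψ.symm x) hw
    refine ⟨σ.symm o, ?_, ?_⟩
    · show x ∈ P (σ.symm o)
      rw [hPmem, Equiv.apply_symm_apply]
      exact ho
    · intro i hi
      have hi' : ψ.symm x ∈ part (σ i) := (hPmem i x).mp hi
      have := huniq (σ i) hi'
      rw [← this, Equiv.symm_apply_apply]
  · rw [hPrank, Equiv.apply_symm_apply]
    exact hdim_zero
  · intro i hi
    rw [hPrank]
    have hne : σ i ≠ some 0 := by
      intro h
      exact hi (by rw [← h, Equiv.symm_apply_apply])
    match hσ : σ i with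
    | none => exact hdim_none
    | some a =>
      refine hdim_some a ?_
      rintro rfl
      exact hne hσ
end

section
/- Let $V$ be a vector space of odd dimension $n = 2m - 1 \geq 3$ over $\mathbb{F}_q$. Then there exists an $m$-dimensional constant rank $n-1$ subspace $\mathcal{M}$ of the space of symmetric bilinear forms on $V$ in which any two linearly independent forms have different radicals. -/
/-- The rank of a bilinear form `f` on `V`: `dim V - dim (rad f)`, where the radical of a
symmetric bilinear form is the kernel of the associated linear map `V →ₗ (V →ₗ K)`. -/
noncomputable def formRank (K : Type*) {V : Type*} [Field K] [AddCommGroup V] [Module K V]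
    (f : V →ₗ[K] V →ₗ[K] K) : ℕ :=
  Module.finrank K V - Module.finrank K (LinearMap.ker f)

open Polynomial Module IntermediateField

/-- Existence of an intermediate field of the algebraic closure of a finite field with any
prescribed finrank, as fixed points of a power of Frobenius. -/
lemma aux_exists_fixedField (K : Type*) [Field K] [Fintype K] (p k : ℕ) [CharP K p]
    (hp : p.Prime) (hk : k ≠ 0) (hcard : Fintype.card K = p ^ k) (N : ℕ) (hN : N ≠ 0) :
    ∃ E : IntermediateField K (AlgebraicClosure K),
      (∀ x : AlgebraicClosure K, x ∈ E ↔ x ^ p ^ (k * N) = x) ∧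
      FiniteDimensional K ↥E ∧ Module.finrank K ↥E = N := by
  haveI : Fact p.Prime := ⟨hp⟩
  set Ω := AlgebraicClosure K with hΩ
  haveI : CharP Ω p := charP_of_injective_algebraMap (algebraMap K Ω).injective p
  have hkN : k * N ≠ 0 := Nat.mul_ne_zero hk hN
  have hr1 : 1 < p ^ (k * N) := Nat.one_lt_pow hkN hp.one_lt
  have hr0 : p ^ (k * N) ≠ 0 := by omega
  have hmapmem : ∀ c : K, (algebraMap K Ω c) ^ p ^ (k * N) = algebraMap K Ω c := by
    intro c
    rw [← map_pow]
    congr 1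
    calc c ^ p ^ (k * N) = c ^ (Fintype.card K) ^ N := by rw [hcard, ← pow_mul]
    _ = c := FiniteField.pow_card_pow N c
  let S : Subalgebra K Ω :=
    { carrier := {x | x ^ p ^ (k * N) = x}
      mul_mem' := by
        intro a b ha hb
        simp only [Set.mem_setOf_eq] at *
        rw [mul_pow, ha, hb]
      one_mem' := by simp
      add_mem' := by
        intro a b ha hb
        simp only [Set.mem_setOf_eq] at *
        rw [add_pow_char_pow, ha, hb]
      algebraMap_mem' := hmapmem }
  have hSmem : ∀ x : Ω, x ∈ S ↔ x ^ p ^ (k * N) = x := fun x => Iff.rfl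
  let E : IntermediateField K Ω := S.toIntermediateField (by
    intro x hx
    rcases eq_or_ne x 0 with h | h
    · rw [h, inv_zero]; exact S.zero_mem
    · have hx' : x ^ p ^ (k * N) = x := hx
      show x⁻¹ ^ p ^ (k * N) = x⁻¹
      rw [inv_pow, hx'])
  have hEmem : ∀ x : Ω, x ∈ E ↔ x ^ p ^ (k * N) = x := fun x => Iff.rfl
  -- count elements
  set g : K[X] := X ^ p ^ (k * N) - X with hg
  have hgsep : g.Separable :=
    galois_poly_separable p (p ^ (k * N)) (dvd_pow_self p hkN)
  have hgsplit : Splits (g.map (algebraMap K Ω)) := IsAlgClosed.splits _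
  have hgdeg : g.natDegree = p ^ (k * N) :=
    FiniteField.X_pow_card_pow_sub_X_natDegree_eq K hkN hp.one_lt
  have hgne : g ≠ 0 := by
    intro h
    rw [h, natDegree_zero] at hgdeg
    omega
  have hmemroot : ∀ x : Ω, x ∈ g.rootSet Ω ↔ x ^ p ^ (k * N) = x := by
    intro x
    rw [mem_rootSet]
    simp only [hgne, ne_eq, not_false_eq_true, true_and, hg, map_sub, aeval_X_pow, aeval_X]
    rw [sub_eq_zero]
    exact (and_iff_right (fun h : (X : K[X]) ^ p ^ (k * N) = X => hgne (by rw [hg, h, sub_self]))).trans sub_eq_zero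
  have hcardroot : Fintype.card (g.rootSet Ω) = p ^ (k * N) := by
    rw [card_rootSet_eq_natDegree hgsep hgsplit, hgdeg]
  let e1 : ↥E ≃ ↥(g.rootSet Ω) :=
    Equiv.subtypeEquivRight (fun x => ((hEmem x).trans (hmemroot x).symm))
  haveI : Fintype ↥E := Fintype.ofEquiv _ e1.symm
  haveI : Finite ↥E := Finite.of_fintype _
  haveI hfd : FiniteDimensional K ↥E := Module.Finite.of_finite
  have hcardE : Fintype.card ↥E = p ^ (k * N) := by
    rw [Fintype.card_congr e1, hcardroot]
  have hpow : Fintype.card ↥E = Fintype.card K ^ Module.finrank K ↥E :=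
    card_eq_pow_finrank
  rw [hcardE, hcard, ← pow_mul] at hpow
  have hexp : k * N = k * Module.finrank K ↥E :=
    Nat.pow_right_injective hp.two_le hpow
  have hfr : Module.finrank K ↥E = N := by
    have := Nat.eq_of_mul_eq_mul_left (Nat.pos_of_ne_zero hk) hexp
    omega
  exact ⟨E, hEmem, hfd, hfr⟩

set_option maxHeartbeats 1000000 in
set_option synthInstance.maxHeartbeats 400000 in
/-- If multiplication by `u` preserves a subspace `V₀ ≤ L` whose dimension is coprime to that
of `L`, then `u` is a scalar. -/
lemma aux_stabilizer {K L : Type*} [Field K] [Field L] [Algebra K L] [FiniteDimensional K L]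
    (V0 : Submodule K L)
    (hcop : Nat.Coprime (Module.finrank K L) (Module.finrank K ↥V0))
    (u : L) (hu : ∀ z ∈ V0, u * z ∈ V0) : ∃ c : K, algebraMap K L c = u := by
  have hint : IsIntegral K u := IsIntegral.of_finite K u
  have hadj : ∀ w ∈ Algebra.adjoin K ({u} : Set L), ∀ z ∈ V0, w * z ∈ V0 := by
    intro w hw
    induction hw using Algebra.adjoin_induction with
    | mem x hx =>
      rcases hx with rfl
      exact hu
    | algebraMap r =>
      intro z hz
      rw [← Algebra.smul_def]
      exact V0.smul_mem r hz
    | add x y hx hy ihx ihy =>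
      intro z hz
      rw [add_mul]
      exact V0.add_mem (ihx z hz) (ihy z hz)
    | mul x y hx hy ihx ihy =>
      intro z hz
      rw [mul_assoc]
      exact ihx _ (ihy z hz)
  have hFmul : ∀ w : K⟮u⟯, ∀ z ∈ V0, (w : L) * z ∈ V0 := by
    intro w
    have hw : (w : L) ∈ Algebra.adjoin K ({u} : Set L) := by
      have h1 := IntermediateField.adjoin_simple_toSubalgebra_of_isAlgebraic hint.isAlgebraic
      have h2 : (w : L) ∈ (IntermediateField.adjoin K ({u} : Set L)).toSubalgebra := w.2
      rwa [h1] at h2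
    exact hadj _ hw
  let V0' : Submodule K⟮u⟯ L :=
    { carrier := (V0 : Set L)
      add_mem' := fun ha hb => V0.add_mem ha hb
      zero_mem' := V0.zero_mem
      smul_mem' := by
        intro c x hx
        have h1 : (c : L) * x ∈ V0 := hFmul c x hx
        rwa [Algebra.smul_def]
        }
  let ident : (↥V0') ≃ₗ[K] ↥V0 :=
    { toFun := fun x => ⟨x.1, x.2⟩
      invFun := fun x => ⟨x.1, x.2⟩
      map_add' := fun _ _ => rfl
      map_smul' := fun _ _ => rfl
      left_inv := fun _ => rfl
      right_inv := fun _ => rfl }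
  have t1 : Module.finrank K K⟮u⟯ * Module.finrank K⟮u⟯ ↥V0' = Module.finrank K ↥V0 := by
    rw [← ident.finrank_eq]
    exact Module.finrank_mul_finrank K K⟮u⟯ ↥V0'
  have t2 : Module.finrank K K⟮u⟯ * Module.finrank K⟮u⟯ L = Module.finrank K L :=
    Module.finrank_mul_finrank K K⟮u⟯ L
  have hd1 : Module.finrank K K⟮u⟯ ∣ Module.finrank K ↥V0 := ⟨_, t1.symm⟩
  have hd2 : Module.finrank K K⟮u⟯ ∣ Module.finrank K L := ⟨_, t2.symm⟩
  have hone : Module.finrank K K⟮u⟯ = 1 := by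
    have := Nat.dvd_gcd hd2 hd1
    rwa [hcop.gcd_eq_one, Nat.dvd_one] at this
  have hbot : K⟮u⟯ = ⊥ := IntermediateField.finrank_eq_one_iff.mp hone
  have humem : u ∈ K⟮u⟯ := IntermediateField.mem_adjoin_simple_self K u
  rw [hbot, IntermediateField.mem_bot] at humem
  exact humem

/-- Radical computation for the forms `(x, y) ↦ τ (b * (x * y))` on `ker τ`. -/
lemma aux_radical {K L : Type*} [Field K] [Field L] [Algebra K L] [FiniteDimensional K L]
    (τ : L →ₗ[K] K)
    (hcop : Nat.Coprime (Module.finrank K L) (Module.finrank K ↥(LinearMap.ker τ)))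
    (b u : L) (hb : b ≠ 0) :
    (∀ z ∈ LinearMap.ker τ, τ (b * (u * z)) = 0) ↔ ∃ c : K, u = c • b⁻¹ := by
  constructor
  · intro h
    rcases eq_or_ne u 0 with rfl | hu
    · exact ⟨0, by simp⟩
    have hw : ∀ z ∈ LinearMap.ker τ, (b * u) * z ∈ LinearMap.ker τ := by
      intro z hz
      rw [LinearMap.mem_ker, mul_assoc]
      exact h z hz
    obtain ⟨c, hc⟩ := aux_stabilizer (LinearMap.ker τ) hcop (b * u) hw
    refine ⟨c, ?_⟩
    have : u = b⁻¹ * (b * u) := by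
      field_simp
    rw [this, ← hc, Algebra.smul_def, mul_comm]
  · rintro ⟨c, rfl⟩
    intro z hz
    have h1 : b * (c • b⁻¹ * z) = c • z := by
      rw [smul_mul_assoc, mul_smul_comm, ← mul_assoc, mul_inv_cancel₀ hb, one_mul]
    rw [h1, map_smul]
    rw [LinearMap.mem_ker] at hz
    rw [hz, smul_zero]

set_option maxHeartbeats 1600000 in
set_option synthInstance.maxHeartbeats 400000 in
theorem different_radicals_odd_dimension
    {K V : Type*} [Field K] [Fintype K] [AddCommGroup V] [Module K V] [FiniteDimensional K V]
    (m : ℕ) (hm : 2 ≤ m) (hn : Module.finrank K V = 2 * m - 1) :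
    ∃ M : Submodule K (V →ₗ[K] V →ₗ[K] K),
      M ≠ ⊥ ∧
      Module.finrank K M = m ∧
      (∀ f ∈ M, ∀ x y : V, f x y = f y x) ∧
      (∀ f ∈ M, f ≠ 0 → formRank K f = (2 * m - 1) - 1) ∧
      (∀ f ∈ M, ∀ g ∈ M, LinearIndependent K ![f, g] →
        LinearMap.ker f ≠ LinearMap.ker g) := by
  classical
  -- characteristic data
  obtain ⟨p, hcharp⟩ := CharP.exists K
  haveI : CharP K p := hcharp
  obtain ⟨k, hp, hcard⟩ := FiniteField.card K p
  have hk : (k : ℕ) ≠ 0 := k.ne_zero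
  -- the big field L of degree 2m and subfield of degree m
  obtain ⟨EL, hELmem, hELfd, hELrank⟩ :=
    aux_exists_fixedField K p k hp hk hcard (2 * m) (by omega)
  obtain ⟨EM, hEMmem, _, hEMrank⟩ :=
    aux_exists_fixedField K p k hp hk hcard m (by omega)
  have hle : ∀ x : AlgebraicClosure K, x ∈ EM → x ∈ EL := by
    intro x hx
    rw [hEMmem] at hx
    rw [hELmem]
    have h3 : p ^ ((k : ℕ) * (2 * m)) = p ^ ((k : ℕ) * m) * p ^ ((k : ℕ) * m) := by
      rw [← pow_add]
      congr 1
      ring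
    rw [h3, pow_mul, hx, hx]
  set L := ↥EL with hLdef
  haveI : FiniteDimensional K L := hELfd
  have hLrank : Module.finrank K L = 2 * m := hELrank
  -- the subfield of degree m, as a submodule of L
  let A : Submodule K L :=
    { carrier := {z : L | (z : AlgebraicClosure K) ∈ EM}
      add_mem' := by
        intro a b ha hb
        simp only [Set.mem_setOf_eq] at *
        rw [IntermediateField.coe_add]
        exact EM.add_mem ha hb
      zero_mem' := by
        simp only [Set.mem_setOf_eq]
        rw [IntermediateField.coe_zero]
        exact EM.zero_mem
      smul_mem' := by
        intro c x hx
        simp only [Set.mem_setOf_eq] at *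
        rw [IntermediateField.coe_smul]
        exact EM.smul_mem hx }
  have hAmem : ∀ z : L, z ∈ A ↔ (z : AlgebraicClosure K) ∈ EM := fun z => Iff.rfl
  have hAinv : ∀ z : L, z ∈ A → z⁻¹ ∈ A := by
    intro z hz
    rw [hAmem] at *
    rw [IntermediateField.coe_inv]
    exact EM.inv_mem hz
  -- finrank A = m
  have hArank : Module.finrank K ↥A = m := by
    let eAM : ↥A ≃ₗ[K] ↥EM :=
      { toFun := fun z => ⟨(z.1 : AlgebraicClosure K), z.2⟩
        invFun := fun w => ⟨⟨w.1, hle w.1 w.2⟩, w.2⟩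
        map_add' := fun _ _ => rfl
        map_smul' := fun _ _ => rfl
        left_inv := fun _ => rfl
        right_inv := fun _ => rfl }
    rw [eAM.finrank_eq, hEMrank]
  -- τ : nonzero functional vanishing on A
  have hAne : A ≠ ⊤ := by
    intro h
    rw [h, finrank_top] at hArank
    rw [hLrank] at hArank
    omega
  obtain ⟨z0, -, hz0⟩ : ∃ z0 ∈ (⊤ : Submodule K L), z0 ∉ A :=
    SetLike.exists_of_lt (Ne.lt_top hAne)
  have hmkQ : A.mkQ z0 ≠ 0 := by
    rw [Submodule.mkQ_apply, ne_eq, Submodule.Quotient.mk_eq_zero]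
    exact hz0
  obtain ⟨φ, hφ⟩ : ∃ φ : Module.Dual K (L ⧸ A), φ (A.mkQ z0) ≠ 0 := by
    by_contra h
    push_neg at h
    exact hmkQ ((Module.forall_dual_apply_eq_zero_iff K _).mp h)
  set τ : L →ₗ[K] K := φ.comp A.mkQ with hτdef
  have hτA : ∀ a ∈ A, τ a = 0 := by
    intro a ha
    simp only [hτdef, LinearMap.comp_apply, Submodule.mkQ_apply]
    rw [(Submodule.Quotient.mk_eq_zero A).mpr ha, map_zero]
  have hτz0 : τ z0 ≠ 0 := hφ
  -- the kernel V0 of τ has dimension 2m - 1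
  set V0 := LinearMap.ker τ with hV0def
  have hτsurj : LinearMap.range τ = ⊤ := by
    rw [LinearMap.range_eq_top]
    intro c
    refine ⟨(c * (τ z0)⁻¹) • z0, ?_⟩
    rw [map_smul, smul_eq_mul]
    field_simp
  have hV0rank : Module.finrank K ↥V0 = 2 * m - 1 := by
    have h := LinearMap.finrank_range_add_finrank_ker τ
    rw [hτsurj, finrank_top, finrank_self, hLrank, ← hV0def] at h
    omega
  have hcop : Nat.Coprime (Module.finrank K L) (Module.finrank K ↥V0) := by
    rw [hLrank, hV0rank]
    have h1 : 2 * m = 1 + (2 * m - 1) := by omega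
    have h2 : Nat.gcd (1 + (2 * m - 1)) (2 * m - 1) = 1 := by
      rw [Nat.gcd_add_self_left, Nat.gcd_one_left]
    rw [← h1] at h2
    exact h2
  -- identify V with V0
  have hVe : Module.finrank K V = Module.finrank K ↥V0 := by rw [hn, hV0rank]
  obtain ⟨e⟩ : Nonempty (V ≃ₗ[K] ↥V0) :=
    FiniteDimensional.nonempty_linearEquiv_of_finrank_eq hVe
  -- the space of forms
  let Φ : L →ₗ[K] (V →ₗ[K] V →ₗ[K] K) :=
    { toFun := fun b =>
      { toFun := fun x =>
        { toFun := fun y => τ (b * ((e x : L) * (e y : L)))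
          map_add' := by
            intro y1 y2
            have h1 : ((e (y1 + y2) : ↥V0) : L) = ((e y1 : ↥V0) : L) + ((e y2 : ↥V0) : L) := by
              rw [map_add]
              rfl
            rw [h1, mul_add, mul_add, map_add]
          map_smul' := by
            intro c y
            have h1 : ((e (c • y) : ↥V0) : L) = c • ((e y : ↥V0) : L) := by
              rw [map_smul]
              rfl
            rw [h1, mul_smul_comm, mul_smul_comm, map_smul, smul_eq_mul]
            rfl }
        map_add' := by
          intro x1 x2
          ext y
          simp only [LinearMap.coe_mk, AddHom.coe_mk, LinearMap.add_apply]
          have h1 : ((e (x1 + x2) : ↥V0) : L) = ((e x1 : ↥V0) : L) + ((e x2 : ↥V0) : L) := by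
            rw [map_add]
            rfl
          rw [h1, add_mul, mul_add, map_add]
        map_smul' := by
          intro c x
          ext y
          simp only [LinearMap.coe_mk, AddHom.coe_mk, RingHom.id_apply,
            LinearMap.smul_apply]
          have h1 : ((e (c • x) : ↥V0) : L) = c • ((e x : ↥V0) : L) := by
            rw [map_smul]
            rfl
          rw [h1, smul_mul_assoc, mul_smul_comm, map_smul, smul_eq_mul] }
      map_add' := by
        intro b1 b2
        ext x y
        simp only [LinearMap.coe_mk, AddHom.coe_mk, LinearMap.add_apply]
        rw [add_mul, map_add]
      map_smul' := by
        intro c b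
        ext x y
        simp only [LinearMap.coe_mk, AddHom.coe_mk, RingHom.id_apply,
          LinearMap.smul_apply]
        rw [smul_mul_assoc, map_smul, smul_eq_mul] }
  have hΦapp : ∀ (b : L) (x y : V), Φ b x y = τ (b * ((e x : L) * (e y : L))) :=
    fun b x y => rfl
  -- kernel of Φ b
  have hbinvV0 : ∀ b : L, b ∈ A → (b⁻¹ : L) ∈ V0 := by
    intro b hb
    rw [hV0def, LinearMap.mem_ker]
    exact hτA b⁻¹ (hAinv b hb)
  have hker_eq : ∀ (b : L) (hbA : b ∈ A), b ≠ 0 →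
      LinearMap.ker (Φ b) = Submodule.span K {e.symm ⟨b⁻¹, hbinvV0 b hbA⟩} := by
    intro b hbA hb
    ext x
    rw [LinearMap.mem_ker, Submodule.mem_span_singleton]
    have hL : (Φ b x = 0) ↔ ∀ z ∈ V0, τ (b * ((e x : L) * z)) = 0 := by
      constructor
      · intro h z hz
        have := congrArg (fun g => g (e.symm ⟨z, hz⟩)) h
        simp only [LinearMap.zero_apply] at this
        rw [hΦapp] at this
        rwa [LinearEquiv.apply_symm_apply] at this
      · intro h
        ext y
        rw [hΦapp, LinearMap.zero_apply]
        exact h (e y : L) (e y).2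
    rw [hL, aux_radical τ hcop b ((e x : L)) hb]
    constructor
    · rintro ⟨c, hc⟩
      refine ⟨c, ?_⟩
      rw [← LinearEquiv.map_smul, LinearEquiv.symm_apply_eq]
      apply Subtype.ext
      rw [Submodule.coe_smul]
      exact hc.symm
    · rintro ⟨c, hc⟩
      refine ⟨c, ?_⟩
      have := congrArg e hc
      rw [LinearEquiv.map_smul, LinearEquiv.apply_symm_apply] at this
      have := congrArg (Subtype.val) this
      simpa using this.symm
  have hwne : ∀ (b : L) (hbA : b ∈ A), b ≠ 0 →
      e.symm ⟨b⁻¹, hbinvV0 b hbA⟩ ≠ 0 := by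
    intro b hbA hb
    rw [ne_eq, LinearEquiv.map_eq_zero_iff, Submodule.mk_eq_zero]
    exact inv_ne_zero hb
  -- injectivity of Φ on A
  have hinj : ∀ b ∈ A, Φ b = 0 → b = 0 := by
    intro b hbA h0
    by_contra hbne
    have h1 := hker_eq b hbA hbne
    rw [h0, LinearMap.ker_zero] at h1
    have h2 := finrank_span_singleton (K := K) (hwne b hbA hbne)
    rw [← h1, finrank_top] at h2
    rw [hn] at h2
    omega
  -- the submodule of forms
  refine ⟨A.map Φ, ?_, ?_, ?_, ?_, ?_⟩
  case refine_2 =>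
    have hkerA : LinearMap.ker (Φ.comp A.subtype) = ⊥ := by
      rw [LinearMap.ker_eq_bot']
      rintro ⟨b, hb⟩ h
      apply Subtype.ext
      exact hinj b hb h
    have hrange : LinearMap.range (Φ.comp A.subtype) = A.map Φ := by
      rw [LinearMap.range_comp, Submodule.range_subtype]
    have h := LinearMap.finrank_range_add_finrank_ker (K := K) (V := ↥A) (V₂ := V →ₗ[K] V →ₗ[K] K) (Φ.comp A.subtype)
    rw [hrange, hkerA, finrank_bot, hArank] at h
    omega
  case refine_1 =>
    have hAbot : A ≠ ⊥ := by
      intro hA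
      rw [hA, finrank_bot] at hArank
      omega
    obtain ⟨b0, hb0A, hb0⟩ := (Submodule.ne_bot_iff A).mp hAbot
    intro h
    have hmem0 : Φ b0 ∈ A.map Φ := Submodule.mem_map_of_mem hb0A
    rw [h, Submodule.mem_bot] at hmem0
    exact hb0 (hinj b0 hb0A hmem0)
  case refine_3 =>
    rintro f ⟨b, hbA, rfl⟩ x y
    rw [hΦapp, hΦapp, mul_comm (e x : L) (e y : L)]
  case refine_4 =>
    rintro f ⟨b, hbA, rfl⟩ hfne
    have hbne : b ≠ 0 := by
      rintro rfl
      rw [map_zero] at hfne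
      exact hfne rfl
    unfold formRank
    rw [hker_eq b hbA hbne, finrank_span_singleton (K := K) (hwne b hbA hbne), hn]
  case refine_5 =>
    rintro f ⟨b, hbA, rfl⟩ g ⟨c, hcA, rfl⟩ hind heq
    have hfne : Φ b ≠ 0 := by
      have := hind.ne_zero 0
      simpa using this
    have hgne : Φ c ≠ 0 := by
      have := hind.ne_zero 1
      simpa using this
    have hbne : b ≠ 0 := by rintro rfl; rw [map_zero] at hfne; exact hfne rfl
    have hcne : c ≠ 0 := by rintro rfl; rw [map_zero] at hgne; exact hgne rfl
    rw [hker_eq b hbA hbne, hker_eq c hcA hcne] at heq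
    have hmem : e.symm ⟨b⁻¹, hbinvV0 b hbA⟩ ∈
        Submodule.span K {e.symm ⟨c⁻¹, hbinvV0 c hcA⟩} := by
      rw [← heq]
      exact Submodule.mem_span_singleton_self _
    rw [Submodule.mem_span_singleton] at hmem
    obtain ⟨t, ht⟩ := hmem
    rw [← LinearEquiv.map_smul] at ht
    have ht2 : (t • (⟨c⁻¹, hbinvV0 c hcA⟩ : ↥V0) : ↥V0) = ⟨b⁻¹, hbinvV0 b hbA⟩ :=
      e.symm.injective ht
    have ht3 : t • (c⁻¹ : L) = b⁻¹ := congrArg Subtype.val ht2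
    have htne : t ≠ 0 := by
      rintro rfl
      rw [zero_smul] at ht3
      exact inv_ne_zero hbne ht3.symm
    have hbc : b = t⁻¹ • c := by
      have h4 : (t • (c⁻¹ : L))⁻¹ = b := by rw [ht3, inv_inv]
      rw [← h4, Algebra.smul_def, mul_inv, inv_inv, ← map_inv₀, ← Algebra.smul_def]
    have hfg : Φ b = t⁻¹ • Φ c := by rw [hbc, map_smul]
    have := (linearIndependent_fin2 (K := K) (V := V →ₗ[K] V →ₗ[K] K)).mp hind |>.2 t⁻¹
    simp only [Matrix.cons_val_one, Matrix.head_cons, Matrix.cons_val_zero] at this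
    exact this hfg.symm
end

section
/- Let $V$ be a vector space of even dimension $n \geq 3$ over $\mathbb{F}_q$ such that $n + 1 = 3m$ is divisible by $3$. Then there exists an $m$-dimensional constant rank $n-1$ subspace $\mathcal{M}$ of the space of symmetric bilinear forms on $V$ in which any two linearly independent forms have different radicals. -/
open Polynomial Module

theorem aux_finrank_splittingField (K : Type*) [Field K] [Fintype K] (d : ℕ) (hd : d ≠ 0) :
    Module.finrank K (SplittingField (X ^ (Fintype.card K ^ d) - X : K[X])) = d := by
  classical
  set q := Fintype.card K with hq
  set L := SplittingField (X ^ q ^ d - X : K[X])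
  haveI : FiniteDimensional K L := inferInstance
  haveI : Fintype L := Fintype.ofFinite L
  set p := ringChar K with hpdef
  haveI : CharP K p := ringChar.charP K
  haveI hfact : Fact p.Prime := ⟨CharP.char_is_prime K p⟩
  obtain ⟨k, hpk, hcard⟩ := FiniteField.card K p
  have hq1 : 1 < q := Fintype.one_lt_card
  set g_poly := (X ^ q ^ d - X : K[X]) with hg
  have aux : g_poly ≠ 0 := FiniteField.X_pow_card_pow_sub_X_ne_zero _ hd hq1
  have hpq : p ∣ q ^ d := by
    rw [hq, hcard]
    exact dvd_pow (dvd_pow_self p k.ne_zero) (by positivity)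
  have key : Fintype.card (g_poly.rootSet L) = g_poly.natDegree :=
    card_rootSet_eq_natDegree (galois_poly_separable p _ hpq)
      (SplittingField.splits (X ^ q ^ d - X : K[X]))
  have nat_degree_eq : g_poly.natDegree = q ^ d :=
    FiniteField.X_pow_card_pow_sub_X_natDegree_eq _ hd hq1
  rw [nat_degree_eq] at key
  haveI : CharP L p := charP_of_injective_algebraMap (algebraMap K L).injective p
  haveI : ExpChar L p := ExpChar.prime hfact.out
  have hqd : q ^ d = p ^ (k * d) := by rw [hq, hcard, ← pow_mul]
  suffices g_poly.rootSet L = Set.univ by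
    simp_rw [this, ← Fintype.ofEquiv_card (Equiv.Set.univ _)] at key
    rw [@card_eq_pow_finrank K _ _ _ _ _ (_)] at key
    exact Nat.pow_right_injective hq1 key
  rw [Set.eq_univ_iff_forall]
  suffices ∀ (x) (_ : x ∈ (⊤ : Subalgebra K L)), x ∈ g_poly.rootSet L by simpa
  rw [← SplittingField.adjoin_rootSet]
  simp_rw [Algebra.mem_adjoin_iff]
  intro x hx
  refine Subring.closure_induction ?_ ?_ ?_ ?_ ?_ ?_ hx <;> simp_rw [mem_rootSet_of_ne aux]
  · rintro x (⟨r, rfl⟩ | hx)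
    · simp only [g_poly, map_sub, map_pow, aeval_X]
      rw [← map_pow, FiniteField.pow_card_pow, sub_self]
    · rwa [mem_rootSet_of_ne aux] at hx
  · rw [← coeff_zero_eq_aeval_zero']
    simp only [g_poly, coeff_X_pow, coeff_X_zero, sub_zero, _root_.map_eq_zero, ite_eq_right_iff,
      one_ne_zero, coeff_sub]
    intro hn
    have : 0 < q ^ d := pow_pos (Nat.lt_of_lt_of_le Nat.zero_lt_one hq1.le) d
    omega
  · simp [g_poly, one_pow]
  · simp only [g_poly, aeval_X_pow, aeval_X, map_sub, hqd, add_pow_char_pow, sub_eq_zero]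
    intro x y _ _ hx hy
    rw [hx, hy]
  · intro x _ hx
    simp only [g_poly, sub_eq_zero, aeval_X_pow, aeval_X, map_sub, sub_neg_eq_add, hqd] at *
    rw [neg_pow, hx, neg_one_pow_char_pow]
    ring
  · simp only [g_poly, aeval_X_pow, aeval_X, map_sub, mul_pow, sub_eq_zero]
    intro x y _ _ hx hy
    rw [hx, hy]

/-- The linear map sending `a : L` to the bilinear form `(x, y) ↦ Tr(a · j x · j y)` on `V`. -/
noncomputable def trForm (K : Type*) {L V : Type*} [Field K] [Field L] [Algebra K L]
    [AddCommGroup V] [Module K V] (j : V →ₗ[K] L) :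
    L →ₗ[K] V →ₗ[K] V →ₗ[K] K where
  toFun a :=
    ((LinearMap.mul K L).compr₂ ((Algebra.trace K L) ∘ₗ LinearMap.mulLeft K a)).compl₁₂ j j
  map_add' a b := by
    ext x y
    simp [LinearMap.compl₁₂_apply, LinearMap.compr₂_apply, add_mul]
  map_smul' c a := by
    ext x y
    simp [LinearMap.compl₁₂_apply, LinearMap.compr₂_apply, smul_mul_assoc]

theorem trForm_apply (K : Type*) {L V : Type*} [Field K] [Field L] [Algebra K L]
    [AddCommGroup V] [Module K V] (j : V →ₗ[K] L) (a : L) (x y : V) :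
    trForm K j a x y = Algebra.trace K L (a * (j x * j y)) := rfl

theorem aux_main {K F L V : Type*} [Field K] [Fintype K] [Field F] [Field L]
    [AddCommGroup V] [Module K V] [FiniteDimensional K V]
    [Algebra K F] [Algebra F L] [Algebra K L] [IsScalarTower K F L]
    [FiniteDimensional K F] [FiniteDimensional F L]
    (n m : ℕ) (hn3 : 3 ≤ n) (h3m : n + 1 = 3 * m)
    (hn : Module.finrank K V = n) (hFm : Module.finrank K F = m)
    (hLF : Module.finrank F L = 3) :
    ∃ M : Submodule K (V →ₗ[K] V →ₗ[K] K),
      M ≠ ⊥ ∧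
      Module.finrank K M = m ∧
      (∀ f ∈ M, ∀ x y : V, f x y = f y x) ∧
      (∀ f ∈ M, f ≠ 0 → formRank K f = n - 1) ∧
      (∀ f ∈ M, ∀ g ∈ M, LinearIndependent K ![f, g] →
        LinearMap.ker f ≠ LinearMap.ker g) := by
  classical
  have hm2 : 2 ≤ m := by omega
  haveI : FiniteDimensional K L := FiniteDimensional.trans K F L
  haveI : Algebra.IsAlgebraic K L := Algebra.IsAlgebraic.of_finite K L
  haveI : Finite K := Finite.of_fintype K
  haveI : Algebra.IsSeparable K L := inferInstance
  have hLK : Module.finrank K L = n + 1 := by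
    rw [← Module.finrank_mul_finrank K F L, hFm, hLF]; omega
  set Tr := Algebra.trace K L with hTrdef
  -- nondegeneracy of the trace form
  have hnd : ∀ u : L, (∀ y : L, Tr (u * y) = 0) → u = 0 := by
    intro u hu
    exact (traceForm_nondegenerate K L).1 u fun y => by
      rw [Algebra.traceForm_apply]; exact hu y
  -- an element of trace 1
  obtain ⟨t, ht⟩ : ∃ t : L, Tr t ≠ 0 := by
    by_contra h
    push_neg at h
    exact one_ne_zero (hnd 1 fun y => by rw [one_mul]; exact h y)
  set e₀ : L := (Tr t)⁻¹ • t with he₀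
  have hTre₀ : Tr e₀ = 1 := by
    rw [he₀, map_smul, smul_eq_mul, inv_mul_cancel₀ ht]
  have hTrsurj : Function.Surjective Tr := by
    intro c
    exact ⟨c • e₀, by rw [map_smul, hTre₀, smul_eq_mul, mul_one]⟩
  -- the trace-zero hyperplane
  have hV0n : Module.finrank K (LinearMap.ker Tr) = n := by
    have hrn := LinearMap.finrank_range_add_finrank_ker Tr
    rw [LinearMap.range_eq_top.mpr hTrsurj, finrank_top, Module.finrank_self, hLK] at hrn
    omega
  -- the key orthogonality property: orthogonal complement of the hyperplane is K·1
  have span_key : ∀ u : L, (∀ y : L, Tr y = 0 → Tr (u * y) = 0) →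
      ∃ c : K, u = algebraMap K L c := by
    intro u hu
    refine ⟨Tr (u * e₀), ?_⟩
    have key : ∀ y : L, Tr (u * y) = Tr (u * e₀) * Tr y := by
      intro y
      have h1 : Tr (y - Tr y • e₀) = 0 := by
        rw [map_sub, map_smul, hTre₀, smul_eq_mul, mul_one, sub_self]
      have h2 := hu _ h1
      rw [mul_sub, map_sub, mul_smul_comm, map_smul, smul_eq_mul, sub_eq_zero] at h2
      rw [h2]; ring
    have h3 : u - algebraMap K L (Tr (u * e₀)) = 0 := by
      apply hnd
      intro y
      rw [sub_mul, map_sub, key y, ← Algebra.smul_def, map_smul, smul_eq_mul, sub_self]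
    rw [← sub_eq_zero]; exact h3
  -- an element γ ≠ 0 of L with Tr_{L/F} γ = 0
  set TrLF := Algebra.trace F L with hTrLFdef
  obtain ⟨γ, hγmem, hγ0⟩ : ∃ γ : L, γ ∈ LinearMap.ker TrLF ∧ γ ≠ 0 := by
    apply Submodule.exists_mem_ne_zero_of_ne_bot
    intro hbot
    have hrn2 := LinearMap.finrank_range_add_finrank_ker TrLF
    rw [hbot, finrank_bot, hLF] at hrn2
    have hle : Module.finrank F (LinearMap.range TrLF) ≤ Module.finrank F F :=
      Submodule.finrank_le _
    rw [Module.finrank_self] at hle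
    omega
  set β : L := γ⁻¹ with hβ
  have hβ0 : β ≠ 0 := inv_ne_zero hγ0
  set ι := algebraMap F L with hι
  -- traces of γ·ι c vanish
  have hγtr : ∀ c : F, Tr (γ * ι c) = 0 := by
    intro c
    have h1 : γ * ι c = c • γ := by rw [Algebra.smul_def]; ring
    rw [h1, hTrdef, ← Algebra.trace_trace (S := F), map_smul]
    have h2 : TrLF γ = 0 := hγmem
    rw [hTrLFdef] at h2
    rw [h2, smul_zero, map_zero]
  -- the embedding of V into L as the trace-zero hyperplane
  have e : V ≃ₗ[K] (LinearMap.ker Tr) :=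
    LinearEquiv.ofFinrankEq _ _ (by rw [hn, hV0n])
  set j : V →ₗ[K] L := (LinearMap.ker Tr).subtype ∘ₗ e.toLinearMap with hjdef
  have hj : ∀ x, Tr (j x) = 0 := fun x => (e x).2
  have hjinj : Function.Injective j :=
    (Submodule.injective_subtype _).comp e.injective
  set Ψ := trForm K j with hΨ
  set φ : F →ₗ[K] L :=
    (LinearMap.mulLeft K β) ∘ₗ (IsScalarTower.toAlgHom K F L).toLinearMap with hφ
  have hφc : ∀ c, φ c = β * ι c := fun c => rfl
  have hφ0 : ∀ c : F, c ≠ 0 → φ c ≠ 0 := by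
    intro c hc
    rw [hφc]
    exact mul_ne_zero hβ0 ((map_ne_zero_iff ι (RingHom.injective ι)).mpr hc)
  -- inverses of elements of φ(F) lie in the hyperplane
  have hainv : ∀ c : F, c ≠ 0 → (φ c)⁻¹ ∈ LinearMap.ker Tr := by
    intro c hc
    have h1 : (φ c)⁻¹ = γ * ι c⁻¹ := by
      rw [hφc, mul_inv, hβ, inv_inv, map_inv₀]
    rw [LinearMap.mem_ker, h1]
    exact hγtr c⁻¹
  -- the kernel of Ψ a is spanned by (the preimage of) a⁻¹
  have hker : ∀ (a : L) (ha : a ≠ 0) (hai : a⁻¹ ∈ LinearMap.ker Tr),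
      LinearMap.ker (Ψ a) = Submodule.span K {e.symm ⟨a⁻¹, hai⟩} := by
    intro a ha hai
    have hjv : j (e.symm ⟨a⁻¹, hai⟩) = a⁻¹ := by
      rw [hjdef]
      show ((e (e.symm ⟨a⁻¹, hai⟩) : LinearMap.ker Tr) : L) = a⁻¹
      rw [e.apply_symm_apply]
    ext x
    simp only [LinearMap.mem_ker, Submodule.mem_span_singleton]
    constructor
    · intro hx
      have hx' : ∀ z : L, Tr z = 0 → Tr ((a * j x) * z) = 0 := by
        intro z hz
        have hjz : j (e.symm ⟨z, hz⟩) = z := by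
          rw [hjdef]
          show ((e (e.symm ⟨z, hz⟩) : LinearMap.ker Tr) : L) = z
          rw [e.apply_symm_apply]
        have h0 := LinearMap.congr_fun hx (e.symm ⟨z, hz⟩)
        rw [hΨ, trForm_apply, hjz, LinearMap.zero_apply] at h0
        rw [mul_assoc]
        exact h0
      obtain ⟨c, hc⟩ := span_key (a * j x) hx'
      refine ⟨c, ?_⟩
      apply hjinj
      have hjx : j x = c • a⁻¹ := by
        have : a⁻¹ * (a * j x) = a⁻¹ * algebraMap K L c := by rw [hc]
        rw [← mul_assoc, inv_mul_cancel₀ ha, one_mul] at this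
        rw [this, Algebra.smul_def]; ring
      rw [map_smul, hjv, hjx]
    · rintro ⟨c, rfl⟩
      ext y
      rw [hΨ, trForm_apply, map_smul, hjv, LinearMap.zero_apply]
      have harg : a * ((c • a⁻¹) * j y) = c • j y := by
        rw [smul_mul_assoc, mul_smul_comm, ← mul_assoc, mul_inv_cancel₀ ha, one_mul]
      rw [harg, map_smul, hj, smul_zero]
  -- preimage vectors are nonzero
  have hv0 : ∀ (a : L) (ha : a ≠ 0) (hai : a⁻¹ ∈ LinearMap.ker Tr),
      e.symm ⟨a⁻¹, hai⟩ ≠ 0 := by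
    intro a ha hai h0
    apply inv_ne_zero ha
    have h1 : (⟨a⁻¹, hai⟩ : LinearMap.ker Tr) = 0 := by
      rwa [LinearEquiv.map_eq_zero_iff] at h0
    exact congrArg Subtype.val h1
  -- kernels have dimension 1
  have hfr : ∀ (a : L) (ha : a ≠ 0) (hai : a⁻¹ ∈ LinearMap.ker Tr),
      Module.finrank K (LinearMap.ker (Ψ a)) = 1 := by
    intro a ha hai
    rw [hker a ha hai]
    exact finrank_span_singleton (hv0 a ha hai)
  -- the subspace M
  set Θ : F →ₗ[K] (V →ₗ[K] V →ₗ[K] K) := Ψ ∘ₗ φ with hΘ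
  have hΘc : ∀ c, Θ c = Ψ (φ c) := fun c => rfl
  have hΘinj : Function.Injective Θ := by
    refine (injective_iff_map_eq_zero Θ).mpr ?_
    intro c hc
    by_contra hc0
    have h1 := hfr (φ c) (hφ0 c hc0) (hainv c hc0)
    rw [show Ψ (φ c) = 0 from hc, LinearMap.ker_zero, finrank_top, hn] at h1
    omega
  refine ⟨LinearMap.range Θ, ?_, ?_, ?_, ?_, ?_⟩
  · -- M ≠ ⊥
    intro hbot
    have h1 : Module.finrank K (LinearMap.range Θ) = m := by
      rw [LinearMap.finrank_range_of_inj hΘinj, hFm]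
    rw [hbot, finrank_bot] at h1
    omega
  · -- finrank = m
    rw [LinearMap.finrank_range_of_inj hΘinj, hFm]
  · -- symmetry
    rintro f ⟨c, rfl⟩ x y
    rw [hΘc, hΨ, trForm_apply, trForm_apply]
    exact congrArg _ (by ring)
  · -- rank n - 1
    rintro f ⟨c, rfl⟩ hf0
    have hc0 : c ≠ 0 := by rintro rfl; exact hf0 (map_zero Θ)
    unfold formRank
    rw [hn, hΘc, hfr (φ c) (hφ0 c hc0) (hainv c hc0)]
  · -- distinct radicals
    rintro f ⟨c, rfl⟩ g ⟨c', rfl⟩ hLI hkereq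
    have hf0 : Θ c ≠ 0 := hLI.ne_zero 0
    have hg0 : Θ c' ≠ 0 := by
      have := hLI.ne_zero 1
      simpa using this
    have hc0 : c ≠ 0 := by rintro rfl; exact hf0 (map_zero Θ)
    have hc0' : c' ≠ 0 := by rintro rfl; exact hg0 (map_zero Θ)
    set a := φ c with hadef
    set a' := φ c' with hadef'
    have ha : a ≠ 0 := hφ0 c hc0
    have ha' : a' ≠ 0 := hφ0 c' hc0'
    have hai := hainv c hc0
    have hai' := hainv c' hc0'
    rw [hΘc, hΘc, hker a ha hai, hker a' ha' hai'] at hkereq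
    have hv' : e.symm ⟨a'⁻¹, hai'⟩ ∈ Submodule.span K {e.symm ⟨a⁻¹, hai⟩} := by
      rw [hkereq]
      exact Submodule.mem_span_singleton_self _
    obtain ⟨s, hs⟩ := Submodule.mem_span_singleton.mp hv'
    have hs0 : s ≠ 0 := by
      rintro rfl
      rw [zero_smul] at hs
      exact hv0 a' ha' hai' hs.symm
    have hinv : a'⁻¹ = s • a⁻¹ := by
      have h1 : (⟨a'⁻¹, hai'⟩ : LinearMap.ker Tr) = s • ⟨a⁻¹, hai⟩ := by
        apply e.symm.injective
        rw [map_smul, hs]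
      have := congrArg Subtype.val h1
      simpa using this
    have haa : a' = s⁻¹ • a := by
      have h2 := congrArg Inv.inv hinv
      rw [inv_inv, Algebra.smul_def, mul_inv, ← map_inv₀, inv_inv, ← Algebra.smul_def] at h2
      exact h2
    have hgf : Θ c' = s⁻¹ • Θ c := by
      rw [hΘc, hΘc, ← hadef, ← hadef', haa, map_smul]
    have hpair := (LinearIndependent.pair_iff' (K := K) (V := V →ₗ[K] V →ₗ[K] K) (x := Θ c) (y := Θ c') hf0).mp hLI s⁻¹
    exact hpair hgf.symm

theorem different_radicals_even_dimension
    {K V : Type*} [Field K] [Fintype K] [AddCommGroup V] [Module K V] [FiniteDimensional K V]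
    (n m : ℕ) (hn3 : 3 ≤ n) (hn_even : Even n) (h3m : n + 1 = 3 * m)
    (hn : Module.finrank K V = n) :
    ∃ M : Submodule K (V →ₗ[K] V →ₗ[K] K),
      M ≠ ⊥ ∧
      Module.finrank K M = m ∧
      (∀ f ∈ M, ∀ x y : V, f x y = f y x) ∧
      (∀ f ∈ M, f ≠ 0 → formRank K f = n - 1) ∧
      (∀ f ∈ M, ∀ g ∈ M, LinearIndependent K ![f, g] →
        LinearMap.ker f ≠ LinearMap.ker g) := by
  classical
  set F := SplittingField (X ^ (Fintype.card K ^ m) - X : K[X]) with hFdef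
  haveI : FiniteDimensional K F := inferInstance
  have hFm : Module.finrank K F = m := aux_finrank_splittingField K m (by omega)
  haveI : Finite F := Module.finite_of_finite K
  haveI : Fintype F := Fintype.ofFinite F
  set L := SplittingField (X ^ (Fintype.card F ^ 3) - X : F[X]) with hLdef
  haveI : FiniteDimensional F L := inferInstance
  have hLF : Module.finrank F L = 3 := aux_finrank_splittingField F 3 (by norm_num)
  exact aux_main (F := F) (L := L) n m hn3 h3m hn hFm hLF
end

section
/- Let $K$ be a field of characteristic different from $2$ and let $V$ be a finite-dimensional vector space over $K$ with $\dim V \geq 2$. Let $f$ and $g$ be symmetric bilinear forms on $V$ of rank $2$, suppose $g$ is not of hyperbolic type, and suppose every nontrivial $K$-linear combination of $f$ and $g$ has rank $2$. Then $f$ and $g$ have the same radical, which has dimension $n - 2$ where $n = \dim V$. -/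
open Module Submodule

/-- If a symmetric bilinear form has an invertible 3×3 Gram matrix, its rank is ≥ 3. -/
lemma auxNeTwo {K V : Type*} [Field K] [AddCommGroup V] [Module K V] [FiniteDimensional K V]
    (h : V →ₗ[K] V →ₗ[K] K) (hs : ∀ a b : V, h a b = h b a) (x y z : V)
    (hdet : (Matrix.det !![h x x, h x y, h x z; h y x, h y y, h y z; h z x, h z y, h z z]) ≠ 0) :
    formRank K h ≠ 2 := by
  set v : Fin 3 → V := ![x, y, z] with hv
  set M : Matrix (Fin 3) (Fin 3) K := Matrix.of fun i j => h (v i) (v j) with hM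
  have hMdet : M.det ≠ 0 := by
    have : !![h x x, h x y, h x z; h y x, h y y, h y z; h z x, h z y, h z z] = M := by
      ext i j
      fin_cases i <;> fin_cases j <;> simp [hM, hv]
    rwa [this] at hdet
  set φ : V →ₗ[K] (Fin 3 → K) := LinearMap.pi (fun i => h (v i)) with hφ
  have hsurj : Function.Surjective φ := by
    intro c
    have hMunit : IsUnit M.det := Ne.isUnit hMdet
    refine ⟨∑ j, (M⁻¹.mulVec c) j • v j, ?_⟩
    funext i
    have h1 : φ (∑ j, (M⁻¹.mulVec c) j • v j) i = ∑ j, M i j * (M⁻¹.mulVec c) j := by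
      simp [hφ, LinearMap.pi_apply, map_sum, map_smul, smul_eq_mul, hM, mul_comm]
    have h2 : ∑ j, M i j * (M⁻¹.mulVec c) j = (M.mulVec (M⁻¹.mulVec c)) i := rfl
    rw [h1, h2, Matrix.mulVec_mulVec, Matrix.mul_nonsing_inv M hMunit, Matrix.one_mulVec]
  have hrange : LinearMap.range φ = ⊤ := LinearMap.range_eq_top.mpr hsurj
  have hrk := LinearMap.finrank_range_add_finrank_ker φ
  rw [hrange, finrank_top] at hrk
  have hpi : finrank K (Fin 3 → K) = 3 := by simp
  have hker : LinearMap.ker h ≤ LinearMap.ker φ := by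
    intro u hu
    have hu' : h u = 0 := hu
    simp only [LinearMap.mem_ker, hφ]
    ext i
    simp [LinearMap.pi_apply, hs (v i) u, hu']
  have hle : finrank K (LinearMap.ker h) ≤ finrank K (LinearMap.ker φ) :=
    Submodule.finrank_mono hker
  simp only [formRank]
  omega

/-- A nonzero symmetric bilinear form over a field of char ≠ 2 has an anisotropic vector. -/
lemma auxAniso {K V : Type*} [Field K] [AddCommGroup V] [Module K V]
    (h : V →ₗ[K] V →ₗ[K] K) (hs : ∀ a b : V, h a b = h b a) (htwo : (2:K) ≠ 0)
    (hne : ∃ a b : V, h a b ≠ 0) : ∃ z : V, h z z ≠ 0 := by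
  by_contra hc
  push_neg at hc
  obtain ⟨a, b, hab⟩ := hne
  have := hc (a + b)
  simp only [map_add, LinearMap.add_apply] at this
  rw [hc a, hc b, hs b a] at this
  apply hab
  have h2 : (2:K) * h a b = 0 := by linear_combination this
  rcases mul_eq_zero.mp h2 with h' | h'
  · exact absurd h' htwo
  · exact h'

lemma auxSupSpan {K V : Type*} [Field K] [AddCommGroup V] [Module K V] [FiniteDimensional K V]
    {p : Submodule K V} {x : V} (hx : x ∉ p) :
    finrank K (p ⊔ span K {x} : Submodule K V) = finrank K p + 1 := by
  have hx0 : x ≠ 0 := fun h => hx (h ▸ p.zero_mem)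
  have hinf : p ⊓ span K {x} = ⊥ := by
    rw [eq_bot_iff]
    rintro y ⟨hyp, hyspan⟩
    obtain ⟨c, rfl⟩ := Submodule.mem_span_singleton.mp hyspan
    rcases eq_or_ne c 0 with rfl | hc
    · simp
    · exact absurd (by simpa [hc, smul_smul] using p.smul_mem c⁻¹ hyp) hx
  have := Submodule.finrank_sup_add_finrank_inf_eq p (span K {x})
  rw [hinf, finrank_bot, finrank_span_singleton hx0] at this
  omega

lemma auxTop {K V : Type*} [Field K] [AddCommGroup V] [Module K V] [FiniteDimensional K V]
    {P : Submodule K V} {w u : V} (hw : w ∉ P) (hu : u ∉ P ⊔ span K {w})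
    (hdim : finrank K P + 2 = finrank K V) :
    P ⊔ span K {w} ⊔ span K {u} = ⊤ := by
  apply eq_top_of_finrank_eq
  rw [auxSupSpan hu, auxSupSpan hw, hdim]

/-- Nondegeneracy of the restriction to a pair of vectors spanning V together with ker h. -/
lemma auxNondeg {K V : Type*} [Field K] [AddCommGroup V] [Module K V] [FiniteDimensional K V]
    (h : V →ₗ[K] V →ₗ[K] K) (hs : ∀ a b : V, h a b = h b a) (w u : V)
    (hw : w ∉ LinearMap.ker h) (hu : u ∉ LinearMap.ker h ⊔ span K {w})
    (htop : LinearMap.ker h ⊔ span K {w} ⊔ span K {u} = ⊤) :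
    h w w * h u u - h w u * h u w ≠ 0 := by
  intro hδ
  obtain ⟨l, m, hlm, h1, h2⟩ : ∃ l m : K, ¬ (l = 0 ∧ m = 0) ∧
      h (l • w + m • u) w = 0 ∧ h (l • w + m • u) u = 0 := by
    by_cases hc : h w w = 0 ∧ h u w = 0
    · refine ⟨1, 0, by simp, ?_, ?_⟩ <;>
        simp [hc.1, hs w u ▸ hc.2, hs u w ▸ hc.2]
    · refine ⟨h u w, -(h w w), ?_, ?_, ?_⟩
      · rintro ⟨hl, hm⟩
        exact hc ⟨neg_eq_zero.mp hm, hl⟩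
      · simp only [map_add, map_smul, LinearMap.add_apply, LinearMap.smul_apply, smul_eq_mul]
        ring
      · simp only [map_add, map_smul, LinearMap.add_apply, LinearMap.smul_apply, smul_eq_mul]
        linear_combination -hδ
  set s : V := l • w + m • u with hsdef
  have hsker : s ∈ LinearMap.ker h := by
    have hker : LinearMap.ker h ⊔ span K {w} ⊔ span K {u} ≤ LinearMap.ker (h s) := by
      refine sup_le (sup_le ?_ ?_) ?_
      · intro a ha
        have ha' : h a = 0 := ha
        simp [LinearMap.mem_ker, hs s a, ha']
      · rw [span_le, Set.singleton_subset_iff]; exact h1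
      · rw [span_le, Set.singleton_subset_iff]; exact h2
    rw [htop, top_le_iff] at hker
    have : h s = 0 := LinearMap.ker_eq_top.mp hker
    exact this
  rcases eq_or_ne m 0 with rfl | hm
  · have hl : l ≠ 0 := fun hl => hlm ⟨hl, rfl⟩
    apply hw
    have : w = l⁻¹ • s := by simp [hsdef, smul_smul, inv_mul_cancel₀ hl]
    rw [this]
    exact (LinearMap.ker h).smul_mem _ hsker
  · apply hu
    have : u = m⁻¹ • (s - l • w) := by
      simp [hsdef, smul_sub, smul_smul, inv_mul_cancel₀ hm]
    rw [this]
    refine Submodule.smul_mem _ _ (Submodule.sub_mem _ ?_ ?_)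
    · exact Submodule.mem_sup_left hsker
    · exact Submodule.mem_sup_right (Submodule.smul_mem _ _ (subset_span rfl))

/-- A rank-2 symmetric bilinear form is of hyperbolic type if some vector `w` outside its
radical satisfies `f w w = 0`. -/
def IsHyperbolicType {K V : Type*} [Field K] [AddCommGroup V] [Module K V]
    (f : V →ₗ[K] V →ₗ[K] K) : Prop :=
  ∃ w : V, w ∉ LinearMap.ker f ∧ f w w = 0

theorem same_radical
    {K V : Type*} [Field K] [AddCommGroup V] [Module K V] [FiniteDimensional K V]
    (hchar : ringChar K ≠ 2) (hdimV : 2 ≤ Module.finrank K V)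
    (f g : V →ₗ[K] V →ₗ[K] K)
    (hf_symm : ∀ x y : V, f x y = f y x) (hg_symm : ∀ x y : V, g x y = g y x)
    (hf : formRank K f = 2) (hg : formRank K g = 2)
    (hg_nothyp : ¬ IsHyperbolicType g)
    (hcomb : ∀ a b : K, (a ≠ 0 ∨ b ≠ 0) → formRank K (a • f + b • g) = 2) :
    LinearMap.ker f = LinearMap.ker g ∧
    Module.finrank K (LinearMap.ker f) = Module.finrank K V - 2 := by
  have htwo : (2:K) ≠ 0 := Ring.two_ne_zero hchar
  simp only [formRank] at hf hg
  have hkf_le := Submodule.finrank_le (LinearMap.ker f)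
  have hkg_le := Submodule.finrank_le (LinearMap.ker g)
  have hA : finrank K (LinearMap.ker f) = finrank K V - 2 := by omega
  have hB : finrank K (LinearMap.ker g) = finrank K V - 2 := by omega
  refine ⟨?_, hA⟩
  have hABrank : finrank K (LinearMap.ker f) = finrank K (LinearMap.ker g) := by omega
  apply Submodule.eq_of_le_of_finrank_eq _ hABrank
  intro v hvA
  by_contra hvB
  have hfv : f v = 0 := hvA
  have hp : g v v ≠ 0 := fun h0 => hg_nothyp ⟨v, hvB, h0⟩
  -- symmetry of the combinations
  have hsymm : ∀ t : K, ∀ a b : V, (t • f + g) a b = (t • f + g) b a := by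
    intro t a b
    simp only [LinearMap.add_apply, LinearMap.smul_apply, smul_eq_mul, hf_symm a b, hg_symm a b]
  have hkey : ∀ (x y z : V) (t : K),
      Matrix.det !![(t • f + g) x x, (t • f + g) x y, (t • f + g) x z;
        (t • f + g) y x, (t • f + g) y y, (t • f + g) y z;
        (t • f + g) z x, (t • f + g) z y, (t • f + g) z z] = 0 := by
    intro x y z t
    by_contra hne
    have h2 := hcomb t 1 (Or.inr one_ne_zero)
    rw [one_smul] at h2
    exact auxNeTwo (t • f + g) (hsymm t) x y z hne h2
  by_cases hcase : ∃ x ∈ LinearMap.ker f, ∃ y ∈ LinearMap.ker f,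
      g x x * g y y - g x y * g y x ≠ 0
  · -- Case 2: g restricted to ker f has rank 2
    obtain ⟨x, hx, y, hy, hD⟩ := hcase
    have hfx : f x = 0 := hx
    have hfy : f y = 0 := hy
    have hfne : ∃ a b : V, f a b ≠ 0 := by
      by_contra hc
      push_neg at hc
      have : LinearMap.ker f = ⊤ := by
        rw [LinearMap.ker_eq_top]
        ext a b
        simp [hc a b]
      rw [this, finrank_top] at hf
      omega
    obtain ⟨z, hz⟩ := auxAniso f hf_symm htwo hfne
    have k1 := hkey x y z 1
    have k2 := hkey x y z (-1)
    rw [Matrix.det_fin_three] at k1 k2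
    simp [LinearMap.add_apply, LinearMap.smul_apply, smul_eq_mul,
      hfx, hfy, hf_symm z x, hf_symm z y] at k1 k2
    have main : (2:K) * (f z z * (g x x * g y y - g x y * g y x)) = 0 := by
      linear_combination k1 - k2
    exact absurd main (mul_ne_zero htwo (mul_ne_zero hz hD))
  · -- Case 1: g restricted to ker f has rank 1
    push_neg at hcase
    have hmem_iso : ∀ x : V, g x x = 0 → x ∈ LinearMap.ker g := by
      intro x h0
      by_contra hx
      exact hg_nothyp ⟨x, hx, h0⟩
    -- ker f ⊓ ker (g v) ≤ ker g
    have claim1 : LinearMap.ker f ⊓ LinearMap.ker (g v) ≤ LinearMap.ker g := by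
      rintro x ⟨hx1, hx2⟩
      have hgvx : g v x = 0 := hx2
      have := hcase x hx1 v hvA
      rw [hg_symm x v, hgvx] at this
      apply hmem_iso
      have : g x x * g v v = 0 := by linear_combination this
      rcases mul_eq_zero.mp this with h' | h'
      · exact h'
      · exact absurd h' hp
    -- dimension counting
    have hrkl := LinearMap.finrank_range_add_finrank_ker (g v)
    have hrgl : finrank K (LinearMap.range (g v)) ≤ 1 := by
      have := Submodule.finrank_le (LinearMap.range (g v))
      simpa using this
    have hinf1 := Submodule.finrank_sup_add_finrank_inf_eq (LinearMap.ker f) (LinearMap.ker (g v))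
    have hsup1_le := Submodule.finrank_le (LinearMap.ker f ⊔ LinearMap.ker (g v))
    have hABinf : finrank K (LinearMap.ker f ⊓ LinearMap.ker (g v) : Submodule K V) ≤
        finrank K (LinearMap.ker f ⊓ LinearMap.ker g : Submodule K V) :=
      Submodule.finrank_mono (le_inf inf_le_left claim1)
    have hinf2 := Submodule.finrank_sup_add_finrank_inf_eq (LinearMap.ker f) (LinearMap.ker g)
    have hinfABle := Submodule.finrank_le (LinearMap.ker f ⊓ LinearMap.ker g)
    have hsupABlt : finrank K (LinearMap.ker f ⊔ LinearMap.ker g : Submodule K V) + 1 ≤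
        finrank K V := by omega
    obtain ⟨u, hu⟩ : ∃ u : V, u ∉ LinearMap.ker f ⊔ LinearMap.ker g := by
      by_contra hc
      push_neg at hc
      have : LinearMap.ker f ⊔ LinearMap.ker g = ⊤ := Submodule.eq_top_iff'.mpr hc
      rw [this, finrank_top] at hsupABlt
      omega
    obtain ⟨w, hwB, hwA⟩ : ∃ w ∈ LinearMap.ker g, w ∉ LinearMap.ker f := by
      apply SetLike.not_le_iff_exists.mp
      intro hle2
      have heq2 := Submodule.eq_of_le_of_finrank_eq hle2 (by omega)
      rw [heq2] at hvB
      exact hvB hvA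
    have hgw : g w = 0 := hwB
    have hu1 : u ∉ LinearMap.ker f ⊔ span K {w} := fun hmem => hu
      (sup_le_sup_left (span_le.mpr (Set.singleton_subset_iff.mpr hwB)) _ hmem)
    have hu2 : u ∉ LinearMap.ker g ⊔ span K {v} := fun hmem => hu (by
      have : LinearMap.ker g ⊔ span K {v} ≤ LinearMap.ker f ⊔ LinearMap.ker g := by
        apply sup_le le_sup_right
        rw [span_le, Set.singleton_subset_iff]
        exact Submodule.mem_sup_left hvA
      exact this hmem)
    have htop1 : LinearMap.ker f ⊔ span K {w} ⊔ span K {u} = ⊤ :=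
      auxTop hwA hu1 (by omega)
    have htop2 : LinearMap.ker g ⊔ span K {v} ⊔ span K {u} = ⊤ :=
      auxTop hvB hu2 (by omega)
    have hδf := auxNondeg f hf_symm w u hwA hu1 htop1
    have hδg := auxNondeg g hg_symm v u hvB hu2 htop2
    have k1 := hkey v w u 1
    have k2 := hkey v w u (-1)
    rw [Matrix.det_fin_three] at k1 k2
    simp [LinearMap.add_apply, LinearMap.smul_apply, smul_eq_mul,
      hfv, hgw, hf_symm w v, hf_symm u v, hf_symm u w, hg_symm u v, hg_symm u w,
      hg_symm w v] at k1 k2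
    have main : (2:K) * (g v v * (f w w * f u u - f w u * f w u)) = 0 := by
      linear_combination k1 + k2
    rw [hf_symm u w] at hδf
    exact absurd main (mul_ne_zero htwo (mul_ne_zero hp hδf))
end

section
/- Let $K$ be a field of characteristic different from $2$ and let $V$ be a finite-dimensional vector space over $K$ with $\dim V \geq 2$. Let $\mathcal{M}$ be a constant rank $2$ subspace of the space of symmetric bilinear forms on $V$ that contains an element that is not of hyperbolic type. Then $\dim \mathcal{M} \leq 2$. -/
/-- Any three vectors have singular Gram matrix with respect to a bilinear form whose kernel
has codimension at most 2. -/
private lemma gram_det_aux {K V : Type*} [Field K] [AddCommGroup V] [Module K V]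
    [FiniteDimensional K V] (h : V →ₗ[K] V →ₗ[K] K)
    (hker : Module.finrank K V ≤ Module.finrank K (LinearMap.ker h) + 2)
    (v1 v2 v3 : V) :
    h v1 v1 * (h v2 v2 * h v3 v3 - h v2 v3 * h v3 v2)
      - h v1 v2 * (h v2 v1 * h v3 v3 - h v2 v3 * h v3 v1)
      + h v1 v3 * (h v2 v1 * h v3 v2 - h v2 v2 * h v3 v1) = 0 := by
  set v : Fin 3 → V := ![v1, v2, v3] with hv
  have hdet : (Matrix.of fun i j => h (v i) (v j)).det = 0 := by
    set G : Matrix (Fin 3) (Fin 3) K := Matrix.of fun i j => h (v i) (v j) with hG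
    by_contra hne
    set T : V →ₗ[K] (Fin 3 → K) := LinearMap.pi fun j => h.flip (v j) with hT
    have hTapp : ∀ x j, T x j = h x (v j) := fun x j => rfl
    have hsurj : Function.Surjective T := by
      intro b
      set c := G.transpose⁻¹.mulVec b with hc
      refine ⟨c 0 • v 0 + c 1 • v 1 + c 2 • v 2, ?_⟩
      funext j
      have hGb : G.transpose.mulVec c = b := by
        rw [hc, Matrix.mulVec_mulVec, Matrix.mul_nonsing_inv, Matrix.one_mulVec]
        simpa [Matrix.det_transpose] using isUnit_iff_ne_zero.mpr hne
      have h1 : G.transpose.mulVec c j = b j := by rw [hGb]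
      have h2 : G.transpose.mulVec c j
          = h (v 0) (v j) * c 0 + h (v 1) (v j) * c 1 + h (v 2) (v j) * c 2 := by
        simp [Matrix.mulVec, dotProduct, Fin.sum_univ_three, hG]
      have h3 : T (c 0 • v 0 + c 1 • v 1 + c 2 • v 2) j
          = c 0 * h (v 0) (v j) + c 1 * h (v 1) (v j) + c 2 * h (v 2) (v j) := by
        simp [hTapp, map_add, map_smul]
      rw [h3, ← h1, h2]; ring
    have hrange : LinearMap.range T = ⊤ := LinearMap.range_eq_top.mpr hsurj
    have h3 : Module.finrank K (LinearMap.range T) = 3 := by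
      rw [hrange]
      simp [finrank_top]
    have hker_le : LinearMap.ker h ≤ LinearMap.ker T := by
      intro x hx
      have hx0 : h x = 0 := hx
      have : T x = 0 := funext fun j => by rw [hTapp, hx0]; rfl
      exact this
    have hrn := LinearMap.finrank_range_add_finrank_ker T
    have hmono := Submodule.finrank_mono hker_le
    rw [h3] at hrn
    omega
  rw [Matrix.det_fin_three] at hdet
  simp only [Matrix.of_apply] at hdet
  have e00 : v 0 = v1 := rfl
  have e11 : v 1 = v2 := rfl
  have e22 : v 2 = v3 := rfl
  rw [e00, e11, e22] at hdet
  linear_combination hdet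

set_option maxHeartbeats 1000000 in
theorem dimension_at_most_2
    {K V : Type*} [Field K] [AddCommGroup V] [Module K V] [FiniteDimensional K V]
    (hchar : ringChar K ≠ 2) (hdimV : 2 ≤ Module.finrank K V)
    (M : Submodule K (V →ₗ[K] V →ₗ[K] K)) (hM0 : M ≠ ⊥)
    (hsymm : ∀ f ∈ M, ∀ x y : V, f x y = f y x)
    (hrank : ∀ f ∈ M, f ≠ 0 → formRank K f = 2)
    (hex : ∃ g ∈ M, g ≠ 0 ∧ ¬ IsHyperbolicType g) :
    Module.finrank K M ≤ 2 := by
  have htwo : (2 : K) ≠ 0 := Ring.two_ne_zero hchar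
  -- kernel dimension of nonzero elements
  have hkdim : ∀ f ∈ M, f ≠ 0 →
      Module.finrank K (LinearMap.ker f) + 2 = Module.finrank K V := by
    intro f hf hf0
    have h1 := hrank f hf hf0
    unfold formRank at h1
    have h2 : Module.finrank K (LinearMap.ker f) ≤ Module.finrank K V :=
      Submodule.finrank_le _
    omega
  -- the determinant identity for all elements of M
  have hdet : ∀ f ∈ M, ∀ v1 v2 v3 : V,
      f v1 v1 * (f v2 v2 * f v3 v3 - f v2 v3 * f v3 v2)
      - f v1 v2 * (f v2 v1 * f v3 v3 - f v2 v3 * f v3 v1)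
      + f v1 v3 * (f v2 v1 * f v3 v2 - f v2 v2 * f v3 v1) = 0 := by
    intro f hf v1 v2 v3
    apply gram_det_aux f _ v1 v2 v3
    by_cases hf0 : f = 0
    · have : LinearMap.ker f = ⊤ := by rw [hf0]; exact LinearMap.ker_zero
      rw [this]
      have : Module.finrank K (⊤ : Submodule K V) = Module.finrank K V := finrank_top K V
      omega
    · have := hkdim f hf hf0
      omega
  obtain ⟨g, hgM, hg0, hgnh⟩ := hex
  have hnh : ∀ w : V, w ∉ LinearMap.ker g → g w w ≠ 0 := by
    intro w hw hc
    exact hgnh ⟨w, hw, hc⟩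
  have hgsym := hsymm g hgM
  -- pick w1
  obtain ⟨w1, hw1⟩ : ∃ w, w ∉ LinearMap.ker g := by
    by_contra hcon
    push_neg at hcon
    exact hg0 (LinearMap.ker_eq_top.mp (eq_top_iff.mpr fun x _ => hcon x))
  have ha : g w1 w1 ≠ 0 := hnh w1 hw1
  -- pick w2 in ker (g w1) outside ker g
  have hker_le1 : LinearMap.ker g ≤ LinearMap.ker (g w1) := by
    intro u hu
    have hu0 : g u = 0 := hu
    have : g w1 u = 0 := by rw [hgsym w1 u, hu0]; rfl
    exact this
  have hnotle : ¬ (LinearMap.ker (g w1) ≤ LinearMap.ker g) := by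
    intro hle
    have hphi : g w1 ≠ 0 := by
      intro hz
      exact ha (by rw [hz]; rfl)
    have hsur : Function.Surjective (g w1) := by
      intro b
      exact ⟨(b / g w1 w1) • w1, by simp [map_smul, div_mul_cancel₀, ha]⟩
    have hr : LinearMap.range (g w1) = ⊤ := LinearMap.range_eq_top.mpr hsur
    have hrn := LinearMap.finrank_range_add_finrank_ker (g w1)
    rw [hr] at hrn
    have h1t : Module.finrank K (⊤ : Submodule K K) = 1 := by simp
    have hmono := Submodule.finrank_mono hle
    have hg2 := hkdim g hgM hg0
    omega
  obtain ⟨w2, hw2k, hw2⟩ := SetLike.not_le_iff_exists.mp hnotle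
  have hd : g w2 w2 ≠ 0 := hnh w2 hw2
  have hb : g w1 w2 = 0 := hw2k
  have hb' : g w2 w1 = 0 := by rw [hgsym w2 w1]; exact hb
  -- independence mod ker g
  have indep : ∀ s t : K, s • w1 + t • w2 ∈ LinearMap.ker g → s = 0 ∧ t = 0 := by
    intro s t hm
    have hm0 : g (s • w1 + t • w2) = 0 := hm
    have h1 : s * g w1 w1 + t * g w2 w1 = 0 := by
      have := congrArg (fun φ => φ w1) hm0
      simpa [map_add, map_smul] using this
    have h2 : s * g w1 w2 + t * g w2 w2 = 0 := by
      have := congrArg (fun φ => φ w2) hm0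
      simpa [map_add, map_smul] using this
    rw [hb'] at h1
    rw [hb] at h2
    constructor
    · have : s * g w1 w1 = 0 := by linear_combination h1
      exact (mul_eq_zero.mp this).resolve_right ha
    · have : t * g w2 w2 = 0 := by linear_combination h2
      exact (mul_eq_zero.mp this).resolve_right hd
  -- anisotropy
  have aniso : ∀ s t : K, s * s * g w1 w1 + t * t * g w2 w2 = 0 → s = 0 ∧ t = 0 := by
    intro s t hst
    by_cases hz : s • w1 + t • w2 ∈ LinearMap.ker g
    · exact indep s t hz
    · exfalso
      apply hnh _ hz
      have : g (s • w1 + t • w2) (s • w1 + t • w2)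
          = s * s * g w1 w1 + s * t * g w1 w2 + t * s * g w2 w1 + t * t * g w2 w2 := by
        simp [map_add, map_smul]
        ring
      rw [this, hb, hb']
      linear_combination hst
  -- spanning
  have hspan : ∀ v : V, ∃ u ∈ LinearMap.ker g, ∃ s t : K, v = u + s • w1 + t • w2 := by
    have hli : LinearIndependent K ![w1, w2] := by
      rw [LinearIndependent.pair_iff]
      intro s t hst
      exact indep s t (by rw [hst]; exact (LinearMap.ker g).zero_mem)
    have hWfin : Module.finrank K (Submodule.span K {w1, w2}) = 2 := by
      have h1 := finrank_span_eq_card hli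
      have h2 : Set.range ![w1, w2] = {w1, w2} := by
        simp [Matrix.range_cons, Matrix.range_empty]
        exact Set.pair_comm w2 w1
      rw [h2] at h1
      simpa using h1
    have hinf : LinearMap.ker g ⊓ Submodule.span K {w1, w2} = ⊥ := by
      rw [eq_bot_iff]
      rintro x ⟨hx1, hx2⟩
      obtain ⟨s, t, rfl⟩ := Submodule.mem_span_pair.mp hx2
      obtain ⟨hs, ht⟩ := indep s t hx1
      simp [hs, ht]
    have hsup := Submodule.finrank_sup_add_finrank_inf_eq (LinearMap.ker g)
      (Submodule.span K {w1, w2})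
    rw [hinf] at hsup
    have hkg2 := hkdim g hgM hg0
    have htop : LinearMap.ker g ⊔ Submodule.span K {w1, w2} = ⊤ := by
      apply Submodule.eq_top_of_finrank_eq
      simp only [finrank_bot, add_zero] at hsup
      omega
    intro v
    have hv : v ∈ LinearMap.ker g ⊔ Submodule.span K {w1, w2} := by
      rw [htop]; trivial
    obtain ⟨u, hu, w, hw, rfl⟩ := Submodule.mem_sup.mp hv
    obtain ⟨s, t, rfl⟩ := Submodule.mem_span_pair.mp hw
    exact ⟨u, hu, s, t, by rw [add_assoc]⟩
  -- the key claims
  have key : ∀ f ∈ M, ∀ u ∈ LinearMap.ker g, f u u = 0 ∧ f w1 u = 0 ∧ f w2 u = 0 := by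
    intro f hf u hu
    have hu0 : g u = 0 := hu
    have hgu1 : g u w1 = 0 := by rw [hu0]; rfl
    have hgu2 : g u w2 = 0 := by rw [hu0]; rfl
    have hguu : g u u = 0 := by rw [hu0]; rfl
    have hg1u : g w1 u = 0 := by rw [hgsym w1 u]; exact hgu1
    have hg2u : g w2 u = 0 := by rw [hgsym w2 u]; exact hgu2
    have hfs := hsymm f hf
    have hq : f w2 w1 = f w1 w2 := hfs w2 w1
    have hxs : f u w1 = f w1 u := hfs u w1
    have hys : f u w2 = f w2 u := hfs u w2
    have E1 := hdet (g + f) (M.add_mem hgM hf) w1 w2 u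
    have E2 := hdet (g - f) (by convert M.add_mem hgM (M.smul_mem (-1 : K) hf) using 1; ext x y; simp [sub_eq_add_neg]) w1 w2 u
    have E3 := hdet f hf w1 w2 u
    simp only [LinearMap.add_apply] at E1
    simp only [LinearMap.sub_apply] at E2
    rw [hb, hb', hgu1, hgu2, hguu, hg1u, hg2u, hq, hxs, hys] at E1 E2
    rw [hq, hxs, hys] at E3
    have hcc : (2 * (g w1 w1 * g w2 w2)) * f u u = 0 := by
      linear_combination E1 - E2 - 2 * E3
    have hc0 : f u u = 0 := by
      rcases mul_eq_zero.mp hcc with h | h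
      · exact absurd h (mul_ne_zero htwo (mul_ne_zero ha hd))
      · exact h
    rw [hc0] at E1 E2
    have hxy : (2 : K) * (f w2 u * f w2 u * g w1 w1 + f w1 u * f w1 u * g w2 w2) = 0 := by
      linear_combination (-1 : K) * E1 - E2
    have hxy' : f w2 u * f w2 u * g w1 w1 + f w1 u * f w1 u * g w2 w2 = 0 := by
      rcases mul_eq_zero.mp hxy with h | h
      · exact absurd h htwo
      · exact h
    obtain ⟨hy0, hx0⟩ := aniso (f w2 u) (f w1 u) hxy'
    exact ⟨hc0, hx0, hy0⟩
  -- every element of M has the same radical as g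
  have kerle : ∀ f ∈ M, LinearMap.ker g ≤ LinearMap.ker f := by
    intro f hf u hu
    have hfs := hsymm f hf
    have huv : ∀ v : V, f u v = 0 := by
      intro v
      obtain ⟨u', hu', s, t, rfl⟩ := hspan v
      have h1 : f u w1 = 0 := by rw [hfs u w1]; exact (key f hf u hu).2.1
      have h2 : f u w2 = 0 := by rw [hfs u w2]; exact (key f hf u hu).2.2
      have h3 : f u u' = 0 := by
        have hsum := (key f hf (u + u') ((LinearMap.ker g).add_mem hu hu')).1
        have e : f (u + u') (u + u') = f u u + f u u' + f u' u + f u' u' := by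
          simp [map_add]
          ring
        rw [e, (key f hf u hu).1, (key f hf u' hu').1, hfs u' u] at hsum
        have h2c : 2 * f u u' = 0 := by linear_combination hsum
        rcases mul_eq_zero.mp h2c with h | h
        · exact absurd h htwo
        · exact h
      simp [map_add, map_smul, h1, h2, h3]
    exact LinearMap.mem_ker.mpr (LinearMap.ext huv)
  -- kill elements vanishing at (w1,w1) and (w1,w2)
  have hker0 : ∀ f ∈ M, f w1 w1 = 0 → f w1 w2 = 0 → f = 0 := by
    intro f hfM hf11 hf12
    have hfz : f = 0 := by
      by_contra hfne
      have hkdf := hkdim f hfM hfne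
      have hkdg := hkdim g hgM hg0
      have hle := kerle f hfM
      have heq : LinearMap.ker g = LinearMap.ker f :=
        Submodule.eq_of_le_of_finrank_le hle (by omega)
      have hw1f : w1 ∈ LinearMap.ker f := by
        rw [LinearMap.mem_ker]
        apply LinearMap.ext
        intro v
        obtain ⟨u, hu, s, t, rfl⟩ := hspan v
        have hfu : f w1 u = 0 := (key f hfM u hu).2.1
        simp [map_add, map_smul, hf11, hf12, hfu]
      rw [← heq] at hw1f
      exact hw1 hw1f
    exact hfz
  let Φ : ↥M →ₗ[K] K × K :=
    { toFun := fun f => ((f : V →ₗ[K] V →ₗ[K] K) w1 w1, (f : V →ₗ[K] V →ₗ[K] K) w1 w2)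
      map_add' := by intro f1 f2; simp
      map_smul' := by intro c f1; simp }
  have hinj : Function.Injective Φ := by
    intro x y hxy
    have h1 : (x : V →ₗ[K] V →ₗ[K] K) w1 w1 = (y : V →ₗ[K] V →ₗ[K] K) w1 w1 :=
      congrArg Prod.fst hxy
    have h2 : (x : V →ₗ[K] V →ₗ[K] K) w1 w2 = (y : V →ₗ[K] V →ₗ[K] K) w1 w2 :=
      congrArg Prod.snd hxy
    have hz := hker0 ((x : V →ₗ[K] V →ₗ[K] K) - (y : V →ₗ[K] V →ₗ[K] K))
      (by convert M.add_mem x.2 (M.smul_mem (-1 : K) y.2) using 1; ext a b; simp [sub_eq_add_neg])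
      (by simp only [LinearMap.sub_apply, h1, sub_self])
      (by simp only [LinearMap.sub_apply, h2, sub_self])
    exact Subtype.ext (sub_eq_zero.mp hz)
  have hfin := LinearMap.finrank_le_finrank_of_injective hinj
  have hKK : Module.finrank K (K × K) = 2 := by
    rw [Module.finrank_prod, Module.finrank_self]
  rw [hKK] at hfin
  exact hfin
end

section
/- Let $V$ be a vector space of dimension $n \geq 2$ over $\mathbb{F}_q$ where $q$ is a power of an odd prime, and let $\mathcal{M}$ be a constant rank $2$ subspace of the space of symmetric bilinear forms on $V$ in which every nonzero element is of hyperbolic type. Then $\dim \mathcal{M} \leq n - 1$. -/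
open LinearMap Module Finset

section Helpers

variable {K V : Type*} [Field K] [AddCommGroup V] [Module K V]

lemma two_ne_zero_of_odd_card [Fintype K] (hq : Odd (Fintype.card K)) : (2 : K) ≠ 0 := by
  intro h2
  have hd : ringChar K ∣ 2 := ringChar.dvd (by exact_mod_cast h2)
  have h1 : ringChar K ≠ 1 := CharP.ringChar_ne_one
  have hch : ringChar K = 2 := by
    rcases (Nat.dvd_prime Nat.prime_two).1 hd with h | h
    · exact absurd h h1
    · exact h
  have := FiniteField.even_card_of_char_two hch
  rw [Nat.odd_iff] at hq
  omega

lemma funct_ker_finrank {W : Type*} [AddCommGroup W] [Module K W] [FiniteDimensional K W]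
    (φ : W →ₗ[K] K) (hφ : φ ≠ 0) :
    Module.finrank K (LinearMap.ker φ) + 1 = Module.finrank K W := by
  have hsurj : Function.Surjective φ := by
    obtain ⟨x, hx⟩ : ∃ x, φ x ≠ 0 := by
      by_contra h; push_neg at h; exact hφ (LinearMap.ext h)
    intro c
    exact ⟨(c * (φ x)⁻¹) • x, by simp [map_smul, mul_assoc, inv_mul_cancel₀ hx]⟩
  have h := LinearMap.finrank_range_add_finrank_ker φ
  rw [LinearMap.range_eq_top.2 hsurj, finrank_top, Module.finrank_self] at h
  omega

lemma card_submodule {W : Type*} [Fintype K] [AddCommGroup W] [Module K W]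
    [FiniteDimensional K W] (p : Submodule K W) :
    Nat.card p = Fintype.card K ^ Module.finrank K p := by
  have : Finite p := Module.finite_of_finite K
  have : Fintype p := Fintype.ofFinite _
  rw [Nat.card_eq_fintype_card]
  exact card_eq_pow_finrank (K := K)

lemma subtype_card_ker {W U : Type*} [AddCommGroup W] [Module K W] [AddCommGroup U] [Module K U]
    (ψ : W →ₗ[K] U) :
    Nat.card {x : W // ψ x = 0} = Nat.card (LinearMap.ker ψ) :=
  Nat.card_congr (Equiv.subtypeEquivRight fun x => (LinearMap.mem_ker).symm)

lemma filter_card_eq_nat_card {α : Type*} [Fintype α] (p : α → Prop) [DecidablePred p] :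
    (Finset.univ.filter p).card = Nat.card {v // p v} := by
  rw [← Fintype.card_subtype p]
  exact Nat.card_eq_fintype_card.symm

lemma hyp_decomp [FiniteDimensional K V]
    (f : V →ₗ[K] V →ₗ[K] K) (hsym : ∀ x y : V, f x y = f y x)
    (hrk : Module.finrank K V - Module.finrank K (LinearMap.ker f) = 2)
    (hn2 : 2 ≤ Module.finrank K V)
    (hhyp : ∃ w : V, w ∉ LinearMap.ker f ∧ f w w = 0) (h2 : (2 : K) ≠ 0) :
    ∃ a b : V →ₗ[K] K, a ≠ 0 ∧ b ≠ 0 ∧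
      f = a.smulRight b + b.smulRight a ∧
      LinearMap.ker a ⊓ LinearMap.ker b = LinearMap.ker f := by
  obtain ⟨w, hw, hww⟩ := hhyp
  rw [LinearMap.mem_ker] at hw
  obtain ⟨u0, hu0⟩ : ∃ u0, f w u0 ≠ 0 := by
    by_contra h; push_neg at h; exact hw (LinearMap.ext h)
  set u : V := (f w u0)⁻¹ • u0 with hu
  have hwu : f w u = 1 := by simp [hu, inv_mul_cancel₀ hu0]
  set c : K := f u u / 2 with hc
  set u' : V := u - c • w with hu'
  have hwu' : f w u' = 1 := by simp [hu', hww, hwu]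
  have huw : f u w = 1 := by rw [hsym]; exact hwu
  have hu'u' : f u' u' = 0 := by
    simp only [hu', map_sub, map_smul, LinearMap.sub_apply, LinearMap.smul_apply,
      smul_eq_mul, hww, hwu, huw]
    rw [hc]; field_simp; ring
  have hu'w : f u' w = 1 := by rw [hsym]; exact hwu'
  set a : V →ₗ[K] K := f w with ha_def
  set b : V →ₗ[K] K := f u' with hb_def
  have haw : a w = 0 := hww
  have hau' : a u' = 1 := hwu'
  have hbw : b w = 1 := hu'w
  have hbu' : b u' = 0 := hu'u'
  have ha : a ≠ 0 := fun h => by simp [h] at hau'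
  have hb : b ≠ 0 := fun h => by simp [h] at hbw
  have hkerf : Module.finrank K (LinearMap.ker f) = Module.finrank K V - 2 := by
    have := Submodule.finrank_le (LinearMap.ker f)
    omega
  have hli : LinearIndependent K ![w, u'] := by
    rw [LinearIndependent.pair_iff]
    intro s t hst
    have h1 : b (s • w + t • u') = 0 := by rw [hst]; simp
    have h2' : a (s • w + t • u') = 0 := by rw [hst]; simp
    simp [map_add, map_smul, haw, hau', hbw, hbu'] at h1 h2'
    exact ⟨h1, h2'⟩
  have hspan2 : Module.finrank K (Submodule.span K {w, u'}) = 2 := by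
    have := finrank_span_eq_card hli
    rwa [Matrix.range_cons_cons_empty, Fintype.card_fin] at this
  have hdisj : Submodule.span K {w, u'} ⊓ LinearMap.ker f = ⊥ := by
    rw [eq_bot_iff]
    intro x hx
    obtain ⟨hx1, hx2⟩ := Submodule.mem_inf.1 hx
    rw [Submodule.mem_span_pair] at hx1
    obtain ⟨s, t, rfl⟩ := hx1
    rw [LinearMap.mem_ker] at hx2
    have e1 : f (s • w + t • u') u' = 0 := by rw [hx2]; simp
    have e2 : f (s • w + t • u') w = 0 := by rw [hx2]; simp
    simp only [map_add, map_smul, LinearMap.add_apply, LinearMap.smul_apply, smul_eq_mul,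
      hwu', hu'u', hww, hu'w, mul_one, mul_zero, add_zero, zero_add] at e1 e2
    simp only [← ha_def, ← hb_def, hwu', hu'u', hww, hu'w, mul_one, mul_zero, add_zero,
      zero_add] at e1 e2
    simp [e1, e2]
  have hsup : Submodule.span K {w, u'} ⊔ LinearMap.ker f = ⊤ := by
    apply Submodule.eq_top_of_finrank_eq
    have h := Submodule.finrank_sup_add_finrank_inf_eq (Submodule.span K {w, u'})
      (LinearMap.ker f)
    rw [hdisj, finrank_bot, hspan2, hkerf] at h
    omega
  set g : V →ₗ[K] V →ₗ[K] K := f - (a.smulRight b + b.smulRight a) with hg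
  have hgzero : g = 0 := by
    have hker : LinearMap.ker g = ⊤ := by
      rw [eq_top_iff, ← hsup]
      apply sup_le
      · rw [Submodule.span_le]
        rintro x (rfl | rfl)
        · rw [SetLike.mem_coe, LinearMap.mem_ker]
          ext y
          simp [hg, haw, hbw]
          exact sub_self _
        · rw [SetLike.mem_coe, LinearMap.mem_ker]
          ext y
          simp [hg, hau', hbu']
          exact sub_self _
      · intro x hx
        rw [LinearMap.mem_ker] at hx ⊢
        have hax : a x = 0 := by rw [ha_def, hsym]; rw [hx]; simp
        have hbx : b x = 0 := by rw [hb_def, hsym]; rw [hx]; simp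
        ext y
        simp [hg, hax, hbx, hx]
    ext x y
    have : x ∈ LinearMap.ker g := by rw [hker]; trivial
    rw [LinearMap.mem_ker] at this
    rw [this]; simp
  have heq : f = a.smulRight b + b.smulRight a := sub_eq_zero.1 hgzero
  refine ⟨a, b, ha, hb, heq, ?_⟩
  ext x
  simp only [Submodule.mem_inf, LinearMap.mem_ker]
  constructor
  · rintro ⟨hax, hbx⟩
    rw [heq]
    ext y
    simp [hax, hbx]
  · intro hx
    constructor
    · rw [ha_def, hsym, hx]; simp
    · rw [hb_def, hsym, hx]; simp

/-- Column lemma: cardinality of kernel of a nonzero functional, multiplied by q. -/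
lemma ker_card_mul {W : Type*} [Fintype K] [AddCommGroup W] [Module K W]
    [FiniteDimensional K W] (φ : W →ₗ[K] K) (hφ : φ ≠ 0) :
    Nat.card {x : W // φ x = 0} * Fintype.card K = Fintype.card K ^ Module.finrank K W := by
  rw [subtype_card_ker, card_submodule, ← pow_succ, funct_ker_finrank φ hφ]

/-- Row lemma: number of zeros of the quadratic form of a hyperbolic rank-2 form. -/
lemma zero_set_card [Fintype K] [FiniteDimensional K V]
    (f : V →ₗ[K] V →ₗ[K] K) (hsym : ∀ x y : V, f x y = f y x)
    (hrk : Module.finrank K V - Module.finrank K (LinearMap.ker f) = 2)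
    (hn2 : 2 ≤ Module.finrank K V)
    (hhyp : ∃ w : V, w ∉ LinearMap.ker f ∧ f w w = 0) (h2 : (2 : K) ≠ 0) :
    Nat.card {v : V // f v v = 0} + Fintype.card K ^ (Module.finrank K V - 2)
      = 2 * Fintype.card K ^ (Module.finrank K V - 1) := by
  classical
  obtain ⟨a, b, ha, hb, heq, hker⟩ := hyp_decomp f hsym hrk hn2 hhyp h2
  haveI : Finite V := Module.finite_of_finite K
  haveI : Fintype V := Fintype.ofFinite V
  have hset : ∀ v : V, f v v = 0 ↔ (a v = 0 ∨ b v = 0) := by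
    intro v
    rw [heq]
    simp only [LinearMap.add_apply, LinearMap.smulRight_apply, LinearMap.smul_apply,
      smul_eq_mul]
    rw [mul_comm (b v) (a v), ← two_mul, mul_eq_zero, mul_eq_zero]
    simp [h2]
  have hcard1 : Nat.card {v : V // f v v = 0}
      = (univ.filter fun v : V => a v = 0 ∨ b v = 0).card := by
    rw [filter_card_eq_nat_card]
    exact Nat.card_congr (Equiv.subtypeEquivRight hset)
  have hfilta : (univ.filter fun v : V => a v = 0).card = Nat.card (LinearMap.ker a) := by
    rw [filter_card_eq_nat_card]; exact subtype_card_ker a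
  have hfiltb : (univ.filter fun v : V => b v = 0).card = Nat.card (LinearMap.ker b) := by
    rw [filter_card_eq_nat_card]; exact subtype_card_ker b
  have hfiltab : (univ.filter fun v : V => a v = 0 ∧ b v = 0).card
      = Nat.card (LinearMap.ker f) := by
    rw [filter_card_eq_nat_card, ← hker]
    refine Nat.card_congr (Equiv.subtypeEquivRight ?_)
    intro v; simp [Submodule.mem_inf, LinearMap.mem_ker]
  have hunion := Finset.card_union_add_card_inter
    (univ.filter fun v : V => a v = 0) (univ.filter fun v : V => b v = 0)
  rw [← Finset.filter_or, ← Finset.filter_and] at hunion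
  have hna : Module.finrank K (LinearMap.ker a) = Module.finrank K V - 1 := by
    have := funct_ker_finrank a ha; omega
  have hnb : Module.finrank K (LinearMap.ker b) = Module.finrank K V - 1 := by
    have := funct_ker_finrank b hb; omega
  have hkerf : Module.finrank K (LinearMap.ker f) = Module.finrank K V - 2 := by
    have := Submodule.finrank_le (LinearMap.ker f); omega
  rw [hcard1]
  rw [hfilta, hfiltb, hfiltab] at hunion
  rw [card_submodule, card_submodule, card_submodule, hna, hnb, hkerf] at hunion
  omega

end Helpers

set_option maxHeartbeats 1000000 in
set_option synthInstance.maxHeartbeats 400000 in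
theorem dimension_at_most_n_sub_one
    {K V : Type*} [Field K] [Fintype K] [AddCommGroup V] [Module K V] [FiniteDimensional K V]
    (hq_odd : Odd (Fintype.card K))
    (n : ℕ) (hn2 : 2 ≤ n) (hn : Module.finrank K V = n)
    (M : Submodule K (V →ₗ[K] V →ₗ[K] K)) (hM0 : M ≠ ⊥)
    (hsymm : ∀ f ∈ M, ∀ x y : V, f x y = f y x)
    (hrank : ∀ f ∈ M, f ≠ 0 → formRank K f = 2)
    (hhyp : ∀ f ∈ M, f ≠ 0 → IsHyperbolicType f) :
    Module.finrank K M ≤ n - 1 := by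
  classical
  by_contra hcon
  push_neg at hcon
  have h2 : (2 : K) ≠ 0 := two_ne_zero_of_odd_card hq_odd
  haveI : Finite V := Module.finite_of_finite K
  haveI : Fintype V := Fintype.ofFinite V
  haveI : Finite M := Module.finite_of_finite K
  haveI : Fintype M := Fintype.ofFinite M
  letI : AddCommGroup M := @Submodule.addCommGroup K (V →ₗ[K] V →ₗ[K] K) _ _ _ M
  obtain ⟨d, rfl⟩ : ∃ d, n = d + 2 := ⟨n - 2, by omega⟩
  set q := Fintype.card K with hq
  have hq2 : 2 ≤ q := Fintype.one_lt_card
  set m := Module.finrank K M with hm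
  obtain ⟨t, hmt⟩ : ∃ t, m = (d + 2) + t := ⟨m - (d + 2), by omega⟩
  have hcardM : Fintype.card M = q ^ m := card_eq_pow_finrank (K := K)
  have hcardV : Fintype.card V = q ^ (d + 2) := by
    rw [card_eq_pow_finrank (K := K), hn]
  -- double counting
  have key : ∑ f : M, ((univ.filter fun v : V => (f : V →ₗ[K] V →ₗ[K] K) v v = 0).card)
      = ∑ v : V, ((univ.filter fun g : M => (g : V →ₗ[K] V →ₗ[K] K) v v = 0).card) := by
    simp_rw [Finset.card_filter]
    exact Finset.sum_comm
  -- row counts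
  have row : ∀ f : M, f ≠ 0 →
      ((univ.filter fun v : V => (f : V →ₗ[K] V →ₗ[K] K) v v = 0).card)
        + q ^ d = 2 * q ^ (d + 1) := by
    intro f hf
    have hf' : (f : V →ₗ[K] V →ₗ[K] K) ≠ 0 := by
      simpa using hf
    have h1 := zero_set_card (V := V) (f : V →ₗ[K] V →ₗ[K] K) (hsymm f.1 f.2)
      (hrank f.1 f.2 hf') (by rw [hn]; omega) (hhyp f.1 f.2 hf') h2
    rw [hn] at h1
    have e1 : d + 2 - 2 = d := by omega
    have e2 : d + 2 - 1 = d + 1 := by omega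
    rw [e1, e2] at h1
    rw [filter_card_eq_nat_card]
    exact h1
  have rowsum : ∑ f : M, ((univ.filter fun v : V => (f : V →ₗ[K] V →ₗ[K] K) v v = 0).card)
      = q ^ (d + 2) + (q ^ m - 1) * (2 * q ^ (d + 1) - q ^ d) := by
    rw [Finset.sum_eq_sum_sdiff_singleton_add (Finset.mem_univ (0 : M))]
    have hzero : ((univ.filter fun v : V =>
        ((0 : M) : V →ₗ[K] V →ₗ[K] K) v v = 0).card) = q ^ (d + 2) := by
      rw [← hcardV, ← Finset.card_univ]
      congr 1
      apply Finset.filter_true_of_mem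
      intro v _
      simp
    rw [hzero]
    have hconst : ∀ f ∈ univ \ {(0 : M)},
        ((univ.filter fun v : V => (f : V →ₗ[K] V →ₗ[K] K) v v = 0).card)
          = 2 * q ^ (d + 1) - q ^ d := by
      intro f hf
      have hf0 : f ≠ 0 := by
        have := (Finset.mem_sdiff.1 hf).2
        simpa using this
      have := row f hf0
      omega
    rw [Finset.sum_congr rfl hconst, Finset.sum_const, smul_eq_mul,
      Finset.card_sdiff_of_subset (by simp), Finset.card_univ, hcardM, Finset.card_singleton]
    exact Nat.add_comm _ _
  -- column counts
  have col0 : ∀ v : V, (∀ g : M, (g : V →ₗ[K] V →ₗ[K] K) v v = 0) →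
      ((univ.filter fun g : M => (g : V →ₗ[K] V →ₗ[K] K) v v = 0).card) = q ^ (d + 2 + t) := by
    intro v hv
    rw [Finset.filter_true_of_mem fun g _ => hv g, Finset.card_univ, hcardM, hmt]
  have col1 : ∀ v : V, ¬ (∀ g : M, (g : V →ₗ[K] V →ₗ[K] K) v v = 0) →
      ((univ.filter fun g : M => (g : V →ₗ[K] V →ₗ[K] K) v v = 0).card) = q ^ (d + 1 + t) := by
    intro v hv
    push_neg at hv
    obtain ⟨g0, hg0⟩ := hv
    set Φ : M →ₗ[K] K :=
      (LinearMap.applyₗ v).comp ((LinearMap.applyₗ v).comp M.subtype) with hΦ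
    have hΦap : ∀ g : M, Φ g = (g : V →ₗ[K] V →ₗ[K] K) v v := fun g => rfl
    have hΦ0 : Φ ≠ 0 := by
      intro h
      apply hg0
      rw [← hΦap g0, h]
      rfl
    have hker := ker_card_mul (W := M) Φ hΦ0
    rw [filter_card_eq_nat_card]
    have hcongr : Nat.card {g : M // (g : V →ₗ[K] V →ₗ[K] K) v v = 0}
        = Nat.card {x : M // Φ x = 0} :=
      Nat.card_congr (Equiv.subtypeEquivRight fun g => by rw [hΦap])
    rw [hcongr]
    have hq0 : 0 < q := by omega
    have hrk : Module.finrank K M = (d + 1 + t) + 1 := by omega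
    rw [hrk, pow_succ] at hker
    exact Nat.eq_of_mul_eq_mul_right hq0 hker
  set P : V → Prop := fun v => ∀ g : M, (g : V →ₗ[K] V →ₗ[K] K) v v = 0 with hP
  set Z := (univ.filter P).card with hZ
  set Z2 := (univ.filter fun v => ¬ P v).card with hZ2
  have hZZ : Z + Z2 = q ^ (d + 2) := by
    rw [hZ, hZ2, Finset.card_filter_add_card_filter_not, Finset.card_univ, hcardV]
  have colsum : ∑ v : V, ((univ.filter fun g : M => (g : V →ₗ[K] V →ₗ[K] K) v v = 0).card)
      = Z * q ^ (d + 2 + t) + Z2 * q ^ (d + 1 + t) := by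
    rw [← Finset.sum_filter_add_sum_filter_not univ P]
    congr 1
    · rw [Finset.sum_congr rfl (fun v hv => col0 v (Finset.mem_filter.1 hv).2),
        Finset.sum_const, smul_eq_mul]
    · rw [Finset.sum_congr rfl (fun v hv => col1 v (Finset.mem_filter.1 hv).2),
        Finset.sum_const, smul_eq_mul]
  have main : Z * q ^ (d + 2 + t) + Z2 * q ^ (d + 1 + t)
      = q ^ (d + 2) + (q ^ (d + 2 + t) - 1) * (2 * q ^ (d + 1) - q ^ d) := by
    rw [← colsum, ← key, rowsum, hmt]
  -- integer arithmetic
  have h1 : (1 : ℕ) ≤ q ^ (d + 2 + t) := Nat.one_le_pow _ _ (by omega)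
  have hqd : q ^ d ≤ 2 * q ^ (d + 1) := by
    have : q ^ d ≤ q ^ (d + 1) := Nat.pow_le_pow_right (by omega) (by omega)
    omega
  zify [h1, hqd] at main
  have hZZ' : (Z : ℤ) + Z2 = (q : ℤ) ^ (d + 2) := by exact_mod_cast hZZ
  have hq2' : (2 : ℤ) ≤ (q : ℤ) := by exact_mod_cast hq2
  have step1 : ((Z : ℤ) * (q : ℤ) ^ (d + 1 + t)) * ((q : ℤ) - 1)
      = ((q : ℤ) ^ d * ((q : ℤ) ^ (d + 2 + t) + (q : ℤ) - 1)) * ((q : ℤ) - 1) := by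
    linear_combination main - (q : ℤ) ^ (d + 1 + t) * hZZ'
  have hq1 : ((q : ℤ) - 1) ≠ 0 := by omega
  have step2 := mul_right_cancel₀ hq1 step1
  have step3 : (q : ℤ) ^ d * ((Z : ℤ) * (q : ℤ) ^ (1 + t))
      = (q : ℤ) ^ d * ((q : ℤ) ^ (d + 2 + t) + (q : ℤ) - 1) := by
    linear_combination step2
  have hqd0 : ((q : ℤ)) ^ d ≠ 0 := pow_ne_zero _ (by omega)
  have step4 := mul_left_cancel₀ hqd0 step3
  have hdvd : (q : ℤ) ∣ 1 := by
    have e : (1 : ℤ) = (q : ℤ) ^ (d + 2 + t) + (q : ℤ) - (Z : ℤ) * (q : ℤ) ^ (1 + t) := by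
      linear_combination step4
    rw [e]
    exact dvd_sub (dvd_add (dvd_pow_self _ (by omega)) dvd_rfl)
      ((dvd_pow_self (q : ℤ) (by omega)).mul_left _)
  have := Int.le_of_dvd one_pos hdvd
  omega
end

section
/- The set of real $2 \times 2$ matrices of the form $\begin{pmatrix} a & b \\ b & -a \end{pmatrix}$, as $a$ and $b$ range over $\mathbb{R}$, is a two-dimensional subspace of the real symmetric $2 \times 2$ matrices, every nonzero element of which defines a symmetric bilinear form on $\mathbb{R}^2$ of rank $2$ and hyperbolic type. (Thus the bound $\dim \mathcal{M} \leq n-1$ for constant rank $2$ subspaces of hyperbolic type fails over $\mathbb{R}$.) -/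
open Matrix

theorem real_hyperbolic_constant_rank_2_plane :
    ∃ M : Submodule ℝ (Matrix (Fin 2) (Fin 2) ℝ),
      (↑M : Set (Matrix (Fin 2) (Fin 2) ℝ)) = {A | ∃ a b : ℝ, A = !![a, b; b, -a]} ∧
      Module.finrank ℝ M = 2 ∧
      ∀ A ∈ M, A ≠ 0 →
        A.IsSymm ∧ A.rank = 2 ∧
        -- the bilinear form `f(x, y) = xᵀ A y` is of hyperbolic type:
        -- some `w` outside the radical of the form satisfies `f(w, w) = 0`
        ∃ w : Fin 2 → ℝ, (∃ u : Fin 2 → ℝ, w ⬝ᵥ A.mulVec u ≠ 0) ∧ w ⬝ᵥ A.mulVec w = 0 := by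
  set X : Matrix (Fin 2) (Fin 2) ℝ := !![1, 0; 0, -1] with hX
  set Y : Matrix (Fin 2) (Fin 2) ℝ := !![0, 1; 1, 0] with hY
  refine ⟨Submodule.span ℝ {X, Y}, ?_, ?_, ?_⟩
  · ext A
    simp only [SetLike.mem_coe, Submodule.mem_span_pair, Set.mem_setOf_eq]
    constructor
    · rintro ⟨a, b, rfl⟩
      refine ⟨a, b, ?_⟩
      ext i j
      fin_cases i <;> fin_cases j <;> simp [hX, hY]
    · rintro ⟨a, b, rfl⟩
      refine ⟨a, b, ?_⟩
      ext i j
      fin_cases i <;> fin_cases j <;> simp [hX, hY]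
  · have hindep : LinearIndependent ℝ ![X, Y] := by
      rw [LinearIndependent.pair_iff]
      intro s t hst
      have h0 : (s • X + t • Y) 0 0 = 0 := by rw [hst]; rfl
      have h1 : (s • X + t • Y) 0 1 = 0 := by rw [hst]; rfl
      simp [hX, hY] at h0 h1
      exact ⟨h0, h1⟩
    have hrange : Set.range ![X, Y] = {X, Y} := by
      ext m
      simp [Fin.exists_fin_two, or_comm]
    rw [← hrange, finrank_span_eq_card hindep]
    simp
  · intro A hA hA0
    rw [Submodule.mem_span_pair] at hA
    obtain ⟨a, b, rfl⟩ := hA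
    set A : Matrix (Fin 2) (Fin 2) ℝ := a • X + b • Y with hA
    have hAeq : A = !![a, b; b, -a] := by
      ext i j
      fin_cases i <;> fin_cases j <;> simp [hA, hX, hY]
    have hab : a ≠ 0 ∨ b ≠ 0 := by
      by_contra h
      push_neg at h
      refine hA0 ?_
      rw [hAeq, h.1, h.2]
      ext i j
      fin_cases i <;> fin_cases j <;> simp
    have hdet : A.det ≠ 0 := by
      rw [hAeq]
      simp [Matrix.det_fin_two_of]
      intro h
      rcases hab with ha | hb
      · nlinarith [sq_nonneg b, mul_self_pos.2 ha]
      · nlinarith [sq_nonneg a, mul_self_pos.2 hb]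
    refine ⟨?_, ?_, ?_⟩
    · rw [hAeq]
      ext i j
      fin_cases i <;> fin_cases j <;> simp [Matrix.IsSymm, Matrix.transpose]
    · rw [Matrix.rank_of_isUnit A ((Matrix.isUnit_iff_isUnit_det A).2 (isUnit_iff_ne_zero.2 hdet))]
      simp
    · by_cases ha : a = 0
      · have hb : b ≠ 0 := by tauto
        refine ⟨![1, 0], ⟨![0, 1], ?_⟩, ?_⟩
        · rw [hAeq, ha]
          simp [Matrix.mulVec, dotProduct, Fin.sum_univ_two]
          exact hb
        · rw [hAeq, ha]
          simp [Matrix.mulVec, dotProduct, Fin.sum_univ_two]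
      · set r : ℝ := Real.sqrt (a ^ 2 + b ^ 2) with hr
        have hr2 : r ^ 2 = a ^ 2 + b ^ 2 := Real.sq_sqrt (by positivity)
        have hrpos : 0 < r := Real.sqrt_pos.2 (by positivity)
        refine ⟨![r - b, a], ⟨![a * r, r * (b - r)], ?_⟩, ?_⟩
        · rw [hAeq]
          simp only [Matrix.mulVec, dotProduct, Fin.sum_univ_two, Matrix.cons_val',
            Matrix.cons_val_zero, Matrix.cons_val_one, Matrix.head_cons, Matrix.empty_val',
            Matrix.cons_val_fin_one, Matrix.head_fin_const, Matrix.of_apply]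
          have key : (r - b) * (a * (a * r) + b * (r * (b - r))) +
              a * (b * (a * r) + -a * (r * (b - r))) = r ^ 2 * (a ^ 2 + (r - b) ^ 2) := by
            nlinarith [hr2]
          rw [key]
          positivity
        · rw [hAeq]
          simp only [Matrix.mulVec, dotProduct, Fin.sum_univ_two, Matrix.cons_val',
            Matrix.cons_val_zero, Matrix.cons_val_one, Matrix.head_cons, Matrix.empty_val',
            Matrix.cons_val_fin_one, Matrix.head_fin_const, Matrix.of_apply]
          linear_combination a * hr2
end

section
/- Let $V$ be a vector space of finite dimension over $\mathbb{F}_q$ with $q \geq 5$, and let $\mathcal{M}$ be a constant rank $4$ subspace of the space of symmetric bilinear forms on $V$ with $\dim \mathcal{M} \geq 2$. Suppose $\mathcal{M}$ contains an element $f$ of negative type, and let $R = \mathrm{rad}\, f$. Then for any other nonzero element $g$ of $\mathcal{M}$ with $S = \mathrm{rad}\, g$, the intersection $R \cap S$ has codimension at most $1$ in both $R$ and $S$. -/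
/-- A symmetric bilinear form `f` of even rank `2 * t` has positive type if the nondegenerate
form induced on `V / rad f` has a totally isotropic subspace of dimension `t`; equivalently,
there is a totally isotropic subspace `W` of `V` containing `rad f` with
`dim W = dim (rad f) + t`. It has negative type otherwise. -/
def IsPositiveType {K V : Type*} [Field K] [AddCommGroup V] [Module K V]
    (f : V →ₗ[K] V →ₗ[K] K) (t : ℕ) : Prop :=
  ∃ W : Submodule K V, LinearMap.ker f ≤ W ∧ (∀ u ∈ W, ∀ v ∈ W, f u v = 0) ∧
    Module.finrank K W = Module.finrank K (LinearMap.ker f) + t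

section aux
variable {K V : Type*} [Field K] [AddCommGroup V] [Module K V]

-- (aux.lean content here)


/-- One-step dimension extension between nested submodules. -/
lemma exists_step [FiniteDimensional K V] (A B : Submodule K V) (hAB : A ≤ B)
    (h : Module.finrank K A < Module.finrank K B) :
    ∃ W : Submodule K V, A ≤ W ∧ W ≤ B ∧
      Module.finrank K W = Module.finrank K A + 1 := by
  have hnle : ¬ B ≤ A := fun hBA => absurd (Submodule.finrank_mono hBA) (by omega)
  obtain ⟨x, hxB, hxA⟩ := SetLike.not_le_iff_exists.mp hnle
  have hx0 : x ≠ 0 := fun h0 => hxA (h0 ▸ A.zero_mem)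
  refine ⟨A ⊔ K ∙ x, le_sup_left, sup_le hAB (by
    rw [Submodule.span_le, Set.singleton_subset_iff]; exact hxB), ?_⟩
  have hinf : A ⊓ (K ∙ x) = ⊥ := by
    rw [eq_bot_iff]
    rintro y ⟨hyA, hyx⟩
    obtain ⟨c, rfl⟩ := Submodule.mem_span_singleton.mp hyx
    rcases eq_or_ne c 0 with rfl | hc
    · simp
    · exact absurd (by simpa [smul_smul, inv_mul_cancel₀ hc] using A.smul_mem c⁻¹ hyA) hxA
  have := Submodule.finrank_sup_add_finrank_inf_eq A (K ∙ x)
  rw [hinf, finrank_span_singleton hx0] at this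
  simpa using this

lemma exists_mid [FiniteDimensional K V] (A B : Submodule K V) (hAB : A ≤ B)
    (h : Module.finrank K A + 2 ≤ Module.finrank K B) :
    ∃ W : Submodule K V, A ≤ W ∧ W ≤ B ∧
      Module.finrank K W = Module.finrank K A + 2 := by
  obtain ⟨W1, hAW1, hW1B, hd1⟩ := exists_step A B hAB (by omega)
  obtain ⟨W, hW1W, hWB, hd⟩ := exists_step W1 B hW1B (by omega)
  exact ⟨W, hAW1.trans hW1W, hWB, by omega⟩



-- (aux2 content)


/-- Orthogonality of kernels of two distinct members of a pencil of symmetric forms. -/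
lemma orth_finite (f g : V →ₗ[K] V →ₗ[K] K)
    (hf : ∀ x y, f x y = f y x) (hg : ∀ x y, g x y = g y x)
    {a b : K} (hab : a ≠ b) {v w : V}
    (hv : f v + a • g v = 0) (hw : f w + b • g w = 0) :
    g v w = 0 ∧ f v w = 0 := by
  have h1 : f v w + a * g v w = 0 := by
    have := congrArg (fun φ : V →ₗ[K] K => φ w) hv; simpa using this
  have h2 : f w v + b * g w v = 0 := by
    have := congrArg (fun φ : V →ₗ[K] K => φ v) hw; simpa using this
  rw [← hf v w, ← hg v w] at h2
  have hg0 : g v w = 0 := by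
    have hs : (a - b) * g v w = 0 := by linear_combination h1 - h2
    rcases mul_eq_zero.mp hs with h | h
    · exact absurd (sub_eq_zero.mp h) hab
    · exact h
  refine ⟨hg0, ?_⟩
  rw [hg0, mul_zero, add_zero] at h1
  exact h1

lemma orth_inf (f g : V →ₗ[K] V →ₗ[K] K)
    (hg : ∀ x y, g x y = g y x) {a : K} {v w : V}
    (hv : f v + a • g v = 0) (hw : g w = 0) :
    g v w = 0 ∧ f v w = 0 := by
  have hgvw : g v w = 0 := by
    rw [hg v w]
    exact congrArg (fun φ : V →ₗ[K] K => φ v) hw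
  have h1 : f v w + a * g v w = 0 := by
    have := congrArg (fun φ : V →ₗ[K] K => φ w) hv; simpa using this
  exact ⟨hgvw, by rw [hgvw, mul_zero, add_zero] at h1; exact h1⟩

/-- Five pairwise orthogonal "blocks" force rank at least 5. -/
lemma rank_ge_five [FiniteDimensional K V] (f : V →ₗ[K] V →ₗ[K] K)
    (u v : Fin 5 → V) (hne : ∀ i, f (u i) (v i) ≠ 0)
    (horth : ∀ i j, i ≠ j → f (u i) (v j) = 0) :
    5 ≤ Module.finrank K (LinearMap.range f) := by
  have hli : LinearIndependent K (fun i => f (u i)) := by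
    rw [Fintype.linearIndependent_iff]
    intro c hc j
    have hev : (∑ i, c i • f (u i)) (v j) = 0 := by rw [hc]; simp
    rw [LinearMap.sum_apply] at hev
    simp only [LinearMap.smul_apply, smul_eq_mul] at hev
    rw [Finset.sum_eq_single j (fun i _ hij => by rw [horth i j hij, mul_zero])
      (by intro h; exact absurd (Finset.mem_univ j) h)] at hev
    exact (mul_eq_zero.mp hev).resolve_right (hne j)
  have hspan : Submodule.span K (Set.range fun i => f (u i)) ≤ LinearMap.range f := by
    rw [Submodule.span_le]
    rintro _ ⟨i, rfl⟩
    exact ⟨u i, rfl⟩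
  calc (5 : ℕ) = Module.finrank K (Submodule.span K (Set.range fun i => f (u i))) := by
        rw [finrank_span_eq_card hli]; simp
    _ ≤ Module.finrank K (LinearMap.range f) := Submodule.finrank_mono hspan



/-- If `f` vanishes identically on a submodule `C` for which `ker f ⊔ C` is big enough,
then `f` has positive type. -/
lemma pos_type [FiniteDimensional K V] (f : V →ₗ[K] V →ₗ[K] K)
    (hf : ∀ x y, f x y = f y x)
    (C : Submodule K V) (hiso : ∀ u ∈ C, ∀ v ∈ C, f u v = 0)
    (hdim : Module.finrank K (LinearMap.ker f) + 2 ≤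
      Module.finrank K (LinearMap.ker f ⊔ C : Submodule K V)) :
    IsPositiveType f 2 := by
  have hiso0 : ∀ u ∈ (LinearMap.ker f ⊔ C : Submodule K V),
      ∀ v ∈ (LinearMap.ker f ⊔ C : Submodule K V), f u v = 0 := by
    intro u hu v hv
    obtain ⟨a, ha, c, hc, rfl⟩ := Submodule.mem_sup.mp hu
    obtain ⟨a', ha', c', hc', rfl⟩ := Submodule.mem_sup.mp hv
    have hfa : f a = 0 := ha
    have hfa' : f a' = 0 := ha'
    have h1 : f c a' = 0 := by rw [hf c a', hfa']; rfl
    have h2 : f a (a' + c') = 0 := by rw [hfa]; rfl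
    have e1 : f a a' = 0 := by simp [hfa]
    have e2 : f a c' = 0 := by simp [hfa]
    have e3 : f c a' = 0 := by rw [hf c a']; simp [hfa']
    simp only [map_add, LinearMap.add_apply]
    rw [e1, e2, e3, hiso c hc c' hc']
    simp
  obtain ⟨W, hAW, hWB, hdW⟩ := exists_mid (LinearMap.ker f) _ le_sup_left hdim
  exact ⟨W, hAW, fun u hu v hv => hiso0 u (hWB hu) v (hWB hv), hdW⟩

end aux

theorem radical_intersection
    {K V : Type*} [Field K] [Fintype K] [AddCommGroup V] [Module K V] [FiniteDimensional K V]
    (hq : 5 ≤ Fintype.card K)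
    (M : Submodule K (V →ₗ[K] V →ₗ[K] K)) (hM0 : M ≠ ⊥)
    (hsymm : ∀ f ∈ M, ∀ x y : V, f x y = f y x)
    (hrank : ∀ f ∈ M, f ≠ 0 → formRank K f = 4)
    (hMdim : 2 ≤ Module.finrank K M)
    (f : V →ₗ[K] V →ₗ[K] K) (hfM : f ∈ M) (hf0 : f ≠ 0)
    (hf_neg : ¬ IsPositiveType f 2)
    (g : V →ₗ[K] V →ₗ[K] K) (hgM : g ∈ M) (hg0 : g ≠ 0) (hgf : g ≠ f) :
    Module.finrank K (LinearMap.ker f) ≤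
      Module.finrank K (LinearMap.ker f ⊓ LinearMap.ker g : Submodule K V) + 1 ∧
    Module.finrank K (LinearMap.ker g) ≤
      Module.finrank K (LinearMap.ker f ⊓ LinearMap.ker g : Submodule K V) + 1 := by
  classical
  set n := Module.finrank K V with hn
  set a := Module.finrank K (LinearMap.ker f) with ha
  set b := Module.finrank K (LinearMap.ker g) with hb
  set d := Module.finrank K (LinearMap.ker f ⊓ LinearMap.ker g : Submodule K V) with hd
  have hfr : n - a = 4 := hrank f hfM hf0
  have hgr : n - b = 4 := hrank g hgM hg0
  have haln : a ≤ n := Submodule.finrank_le _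
  have hbln : b ≤ n := Submodule.finrank_le _
  have hsf : ∀ x y, f x y = f y x := hsymm f hfM
  have hsg : ∀ x y, g x y = g y x := hsymm g hgM
  -- the key claim
  have key : ¬ (d + 2 ≤ a) := by
    intro hcon
    -- case ∞ : f vanishes on ker g
    by_cases hinf : ∀ u ∈ LinearMap.ker g, ∀ w ∈ LinearMap.ker g, f u w = 0
    · apply hf_neg
      apply pos_type f hsf (LinearMap.ker g) hinf
      have hsupinf := Submodule.finrank_sup_add_finrank_inf_eq
        (LinearMap.ker f) (LinearMap.ker g)
      omega
    · by_cases hfin : ∃ lam : K, lam ≠ 0 ∧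
          ∀ u ∈ LinearMap.ker (f + lam • g), ∀ w ∈ LinearMap.ker (f + lam • g), g u w = 0
      · obtain ⟨lam, hlam0, hgood⟩ := hfin
        set h : V →ₗ[K] V →ₗ[K] K := f + lam • g with hh
        have hhM : h ∈ M := M.add_mem hfM (M.smul_mem lam hgM)
        have hh0 : h ≠ 0 := by
          intro h0
          apply hg0
          ext x y
          have hx : x ∈ LinearMap.ker h := by rw [h0]; simp
          have hy : y ∈ LinearMap.ker h := by rw [h0]; simp
          simpa using hgood x hx y hy
        have hhr : n - Module.finrank K (LinearMap.ker h) = 4 := hrank h hhM hh0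
        have hhln : Module.finrank K (LinearMap.ker h) ≤ n := Submodule.finrank_le _
        -- f vanishes on ker h
        have hiso : ∀ u ∈ LinearMap.ker h, ∀ w ∈ LinearMap.ker h, f u w = 0 := by
          intro u hu w hw
          have h1 : f u w + lam * g u w = 0 := by
            have := congrArg (fun φ : V →ₗ[K] K => φ w) (LinearMap.mem_ker.mp hu)
            simpa [hh] using this
          rw [hgood u hu w hw, mul_zero, add_zero] at h1
          exact h1
        -- ker f ⊓ ker h = ker f ⊓ ker g
        have hinter : (LinearMap.ker f ⊓ LinearMap.ker h : Submodule K V)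
            = LinearMap.ker f ⊓ LinearMap.ker g := by
          ext v
          simp only [Submodule.mem_inf, LinearMap.mem_ker]
          constructor
          · rintro ⟨hvf, hvh⟩
            refine ⟨hvf, ?_⟩
            have : lam • g v = 0 := by
              have := hvh
              rw [hh] at this
              simp only [LinearMap.add_apply, LinearMap.smul_apply, hvf, zero_add] at this
              exact this
            have := congrArg (fun z => lam⁻¹ • z) this
            simpa [smul_smul, inv_mul_cancel₀ hlam0] using this
          · rintro ⟨hvf, hvg⟩
            refine ⟨hvf, ?_⟩
            rw [hh]
            simp [hvf, hvg]
        apply hf_neg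
        apply pos_type f hsf (LinearMap.ker h) hiso
        have hsupinf := Submodule.finrank_sup_add_finrank_inf_eq
          (LinearMap.ker f) (LinearMap.ker h)
        rw [hinter] at hsupinf
        omega
      · -- all finite nonzero lam bad, and ∞ bad: five blocks
        push_neg at hfin hinf
        obtain ⟨u5, hu5, v5, hv5, hfu5v5⟩ := hinf
        -- four distinct nonzero elements of K
        have hcard : 4 ≤ (Finset.univ.erase (0 : K)).card := by
          rw [Finset.card_erase_of_mem (Finset.mem_univ 0), Finset.card_univ]
          omega
        obtain ⟨t, hts, htc⟩ := Finset.exists_subset_card_eq hcard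
        let e := t.equivFinOfCardEq htc
        set lam : Fin 4 → K := fun i => ((e.symm i : t) : K) with hlamdef
        have hlaminj : Function.Injective lam := by
          intro i j hij
          have := Subtype.ext hij
          exact e.symm.injective this
        have hlamne : ∀ i, lam i ≠ 0 := by
          intro i
          have hmem : (lam i) ∈ t := (e.symm i).2
          have := hts hmem
          exact Finset.ne_of_mem_erase this
        -- bad witnesses for each finite lam
        have hbad : ∀ i : Fin 4, ∃ u ∈ LinearMap.ker (f + lam i • g),
            ∃ w ∈ LinearMap.ker (f + lam i • g), g u w ≠ 0 := fun i =>
          hfin (lam i) (hlamne i)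
        choose uF huF vF hvF hgF using hbad
        -- block vectors
        set U : Fin 5 → V := Fin.snoc uF u5 with hU
        set W : Fin 5 → V := Fin.snoc vF v5 with hW
        have hker : ∀ i : Fin 4, f (uF i) + lam i • g (uF i) = 0 ∧
            f (vF i) + lam i • g (vF i) = 0 := by
          intro i
          constructor
          · have := LinearMap.mem_ker.mp (huF i); simpa using this
          · have := LinearMap.mem_ker.mp (hvF i); simpa using this
        have hdiag : ∀ i, f (U i) (W i) ≠ 0 := by
          intro i
          refine Fin.lastCases ?_ ?_ i
          · simp only [hU, hW, Fin.snoc_last]; exact hfu5v5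
          · intro j
            simp only [hU, hW, Fin.snoc_castSucc]
            have h1 : f (uF j) (vF j) + lam j * g (uF j) (vF j) = 0 := by
              have := congrArg (fun φ : V →ₗ[K] K => φ (vF j)) (hker j).1
              simpa using this
            intro h0
            rw [h0, zero_add] at h1
            exact (hgF j) ((mul_eq_zero.mp h1).resolve_left (hlamne j))
        have horth : ∀ i j, i ≠ j → f (U i) (W j) = 0 := by
          intro i j hij
          rcases Fin.eq_castSucc_or_eq_last i with ⟨i', rfl⟩ | rfl
          · rcases Fin.eq_castSucc_or_eq_last j with ⟨j', rfl⟩ | rfl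
            · have hne' : lam i' ≠ lam j' := fun h =>
                hij (congrArg Fin.castSucc (hlaminj h))
              simp only [hU, hW, Fin.snoc_castSucc]
              exact (orth_finite f g hsf hsg hne' (hker i').1 (hker j').2).2
            · simp only [hU, hW, Fin.snoc_last, Fin.snoc_castSucc]
              exact (orth_inf f g hsg (hker i').1 (LinearMap.mem_ker.mp hv5)).2
          · rcases Fin.eq_castSucc_or_eq_last j with ⟨j', rfl⟩ | rfl
            · simp only [hU, hW, Fin.snoc_last, Fin.snoc_castSucc]
              rw [hsf]
              exact (orth_inf f g hsg (hker j').2 (LinearMap.mem_ker.mp hu5)).2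
            · exact absurd rfl hij
        have h5 := rank_ge_five f U W hdiag horth
        have hrn := LinearMap.finrank_range_add_finrank_ker f
        omega
  constructor
  · omega
  · omega
end
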